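/- arXiv:2206.04010 — 2 statements merged into one kernel-verified Lean document; each statement's English description precedes it below -/
import Mathlib

section
/- Let φ ∈ Out(G) be an automorphism admitting a train track representative f : T → T with primitive transition matrix. Then Lip(f) = Lip(T, T·φ) = min over S ∈ 𝒟 of Lip(S, S·φ). -/
/-!
Common framework: metric `ℝ`-trees with isometric `G`-action, modelling the
geometric realizations of the simplicial metric `G`-trees of the cyclic
deformation space `𝒟` of a (non-solvable) GBS group `G`, together with the
Lipschitz metric, translation lengths, axes, train track representatives, etc.
-/

namespace GBSFormal

/-- A metric `ℝ`-tree (geodesic, 0-hyperbolic metric space) equipped with an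
isometric action of `G`.  This models the geometric realization of a
simplicial metric `G`-tree. -/
structure GTree (G : Type*) [Group G] where
  X : Type
  dist : X → X → ℝ
  dist_self : ∀ x, dist x x = 0
  eq_of_dist : ∀ x y, dist x y = 0 → x = y
  dist_comm : ∀ x y, dist x y = dist y x
  dist_triangle : ∀ x y z, dist x z ≤ dist x y + dist y z
  /-- the four-point condition: `X` is `0`-hyperbolic -/
  four_point : ∀ x y z w,
    dist x y + dist z w ≤ max (dist x z + dist y w) (dist x w + dist y z)
  /-- `X` is geodesic -/
  geodesic : ∀ x y, ∃ γ : ℝ → X, γ 0 = x ∧ γ (dist x y) = y ∧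
    ∀ s t, 0 ≤ s → s ≤ dist x y → 0 ≤ t → t ≤ dist x y → dist (γ s) (γ t) = |s - t|
  smul : G → X → X
  smul_one : ∀ x, smul 1 x = x
  smul_mul : ∀ g h x, smul (g * h) x = smul g (smul h x)
  /-- `G` acts by isometries -/
  isom : ∀ g x y, dist (smul g x) (smul g y) = dist x y

variable {G : Type*} [Group G]

namespace GTree

/-- The geodesic segment `[x,y]` in the tree `T`. -/
def seg (T : GTree G) (x y : T.X) : Set T.X :=
  {z | T.dist x z + T.dist z y = T.dist x y}

/-- The translation length `‖g‖_T`. -/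
noncomputable def tl (T : GTree G) (g : G) : ℝ :=
  sInf (Set.range fun x => T.dist x (T.smul g x))

/-- `g` is loxodromic on `T`. -/
def Loxodromic (T : GTree G) (g : G) : Prop := 0 < T.tl g

/-- The axis (characteristic set) of `g` in `T`. -/
noncomputable def axis (T : GTree G) (g : G) : Set T.X :=
  {x | T.dist x (T.smul g x) = T.tl g}

/-- The (pointwise) stabilizer of a point of `T`. -/
def stab (T : GTree G) (x : T.X) : Subgroup G where
  carrier := {g | T.smul g x = x}
  one_mem' := T.smul_one x
  mul_mem' := by
    intro a b (ha : _ = _) (hb : _ = _)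
    show T.smul (a * b) x = x
    rw [T.smul_mul, hb, ha]
  inv_mem' := by
    intro a (ha : T.smul a x = x)
    show T.smul a⁻¹ x = x
    calc T.smul a⁻¹ x = T.smul a⁻¹ (T.smul a x) := by rw [ha]
      _ = T.smul (a⁻¹ * a) x := (T.smul_mul _ _ _).symm
      _ = x := by rw [inv_mul_cancel, T.smul_one]

/-- The action of `G` on `T` is minimal: no proper nonempty invariant subtree. -/
def Minimal (T : GTree G) : Prop :=
  ∀ A : Set T.X, A.Nonempty → (∀ g, ∀ x ∈ A, T.smul g x ∈ A) →
    (∀ x ∈ A, ∀ y ∈ A, T.seg x y ⊆ A) → A = Set.univ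

/-- Twisting the action by an automorphism `φ`: this is the tree `T · φ`,
i.e. `T` with marking precomposed with `φ`. -/
def twist (T : GTree G) (φ : MulAut G) : GTree G :=
  { T with
    smul := fun g x => T.smul (φ g) x
    smul_one := by intro x; simp only [map_one]; exact T.smul_one x
    smul_mul := by intro g h x; simp only [map_mul]; exact T.smul_mul _ _ x
    isom := fun g x y => T.isom (φ g) x y }

end GTree

/-- A `G`-equivariant map between `G`-trees. -/
def Equivariant (T S : GTree G) (f : T.X → S.X) : Prop :=
  ∀ g x, f (T.smul g x) = S.smul g (f x)

/-- `f : T → S` is `K`-Lipschitz. -/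
def LipWith (T S : GTree G) (K : ℝ) (f : T.X → S.X) : Prop :=
  ∀ x y, S.dist (f x) (f y) ≤ K * T.dist x y

/-- The optimal Lipschitz constant `Lip(T,S)` among `G`-equivariant maps. -/
noncomputable def lipConst (T S : GTree G) : ℝ :=
  sInf {K | 0 ≤ K ∧ ∃ f : T.X → S.X, Equivariant T S f ∧ LipWith T S K f}

/-- An optimal map: a `G`-equivariant map realizing `Lip(T,S)`. -/
def IsOptimal (T S : GTree G) (f : T.X → S.X) : Prop :=
  Equivariant T S f ∧ LipWith T S (lipConst T S) f

/-- `f : T → S` is a `(K,C)`-quasi-isometry. -/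
def QIsom (T S : GTree G) (K C : ℝ) (f : T.X → S.X) : Prop :=
  ∀ x y, K⁻¹ * T.dist x y - C ≤ S.dist (f x) (f y) ∧
    S.dist (f x) (f y) ≤ K * T.dist x y + C

/-- An infinite cyclic group. -/
def InfiniteCyclic (H : Type*) [Group H] : Prop :=
  Nonempty (H ≃* Multiplicative ℤ)

/-- The Baumslag–Solitar relator of `BS(1,n) = ⟨a, t | t a t⁻¹ = aⁿ⟩`
(with `a = of false`, `t = of true`). -/
def bsRel (n : ℕ) : Set (FreeGroup Bool) :=
  {FreeGroup.of true * FreeGroup.of false * (FreeGroup.of true)⁻¹ *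
    ((FreeGroup.of false) ^ n)⁻¹}

/-- A solvable GBS group: a group isomorphic to `ℤ` or to some `BS(1,n)`. -/
def IsSolvableGBS (G : Type*) [Group G] : Prop :=
  Nonempty (G ≃* Multiplicative ℤ) ∨ ∃ n : ℕ, Nonempty (G ≃* PresentedGroup (bsRel n))

/-- The cyclic deformation space `𝒟` of a non-solvable GBS group `G`:
a family of minimal metric `G`-trees with infinite cyclic point stabilizers
and cobounded action, any two of which admit equivariant (Lipschitz) maps in
both directions (same elliptic subgroups); together with the covolume
`vol(T/G)`, the right action of automorphisms (twisting the marking) and the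
family of cyclic factors of `G`. -/
structure DefSpace (G : Type*) [Group G] where
  D : Type
  tr : D → GTree G
  minimal : ∀ T, (tr T).Minimal
  stab_ic : ∀ (T : D) (x : (tr T).X), InfiniteCyclic ((tr T).stab x)
  cobounded : ∀ T : D, ∃ (x : (tr T).X) (r : ℝ), ∀ y, ∃ g : G,
      (tr T).dist ((tr T).smul g x) y ≤ r
  vol : D → ℝ
  vol_pos : ∀ T, 0 < vol T
  maps_exist : ∀ T S : D, ∃ (K : ℝ) (f : (tr T).X → (tr S).X),
      0 ≤ K ∧ Equivariant (tr T) (tr S) f ∧ LipWith (tr T) (tr S) K f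
  act : D → MulAut G → D
  act_tr : ∀ T φ, tr (act T φ) = (tr T).twist φ
  cyclicFactor : Subgroup G → Prop
  nonsolvable : ¬ IsSolvableGBS G

namespace DefSpace

/-- The Lipschitz metric `d_Lip` on `𝒟`. -/
noncomputable def dLip (S : DefSpace G) (T T' : S.D) : ℝ :=
  Real.log (lipConst (S.tr T) (S.tr T') * S.vol T / S.vol T')

/-- `φ` is fully irreducible: no positive power of `φ` preserves the
conjugacy class of a cyclic factor of `G`. -/
def FullyIrr (S : DefSpace G) (φ : MulAut G) : Prop :=
  ∀ n : ℕ, 1 ≤ n → ∀ H : Subgroup G, S.cyclicFactor H →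
    ¬ ∃ g : G, Subgroup.map ((φ ^ n : MulAut G) : G ≃* G).toMonoidHom H
        = Subgroup.map ((MulAut.conj g : G ≃* G)).toMonoidHom H

/-- A geodesic line for the Lipschitz metric. -/
def IsGeodesicLine (S : DefSpace G) (L : ℝ → S.D) : Prop :=
  ∀ t s : ℝ, t < s → S.dLip (L t) (L s) = s - t

end DefSpace

/-- A train track representative of (the outer class of) the automorphism `φ`:
a `φ`-equivariant map `f : T → T` with uniform stretch factor `lam > 1` on
edges, admitting a legal segment (legality of a segment being characterized
metrically by exact stretching by `lam` under all iterates of `f`), with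
bounded-backtracking constant `bbt`. -/
structure TrainTrackRep (T : GTree G) (φ : MulAut G) where
  f : T.X → T.X
  lam : ℝ
  lam_gt_one : 1 < lam
  equivariant : ∀ g x, f (T.smul g x) = T.smul (φ g) (f x)
  lip : ∀ x y, T.dist (f x) (f y) ≤ lam * T.dist x y
  exists_legal : ∃ x y, x ≠ y ∧ ∀ n : ℕ,
      T.dist (f^[n] x) (f^[n] y) = lam ^ n * T.dist x y
  bbt : ℝ
  bbt_nonneg : 0 ≤ bbt
  bbt_spec : ∀ x y z, z ∈ T.seg x y →
      ∃ w ∈ T.seg (f x) (f y), T.dist (f z) w ≤ bbt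

namespace TrainTrackRep

variable {T : GTree G} {φ : MulAut G}

/-- The segment `[x,y]` is legal: all iterates of `f` stretch it exactly
by the stretch factor. -/
def LegalSeg (tt : TrainTrackRep T φ) (x y : T.X) : Prop :=
  ∀ n : ℕ, T.dist (tt.f^[n] x) (tt.f^[n] y) = tt.lam ^ n * T.dist x y

/-- The critical constant `C_f = 2·BBT(f)/(λ-1)`. -/
noncomputable def criticalConst (tt : TrainTrackRep T φ) : ℝ :=
  2 * tt.bbt / (tt.lam - 1)

/-- A periodic Nielsen path, recorded by its (distinct) endpoints: a
non-backtracking segment `η = [x,y]` with `g·[fⁿ(η)] = η` for some `g ∈ G`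
and `n ≥ 1`. -/
def IsPerNielsen (tt : TrainTrackRep T φ) (x y : T.X) : Prop :=
  x ≠ y ∧ ∃ (g : G) (n : ℕ), 1 ≤ n ∧
    T.smul g (tt.f^[n] x) = x ∧ T.smul g (tt.f^[n] y) = y

/-- A periodic indivisible Nielsen path (pINP): a periodic Nielsen path that is
not a non-backtracking concatenation of two periodic Nielsen paths. -/
def IsPINP (tt : TrainTrackRep T φ) (x y : T.X) : Prop :=
  tt.IsPerNielsen x y ∧
    ¬ ∃ z ∈ T.seg x y, z ≠ x ∧ z ≠ y ∧ tt.IsPerNielsen x z ∧ tt.IsPerNielsen z y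

/-- Metric form of primitivity of the transition matrix `A(f)`: iterated
images of any nondegenerate segment eventually meet every `G`-orbit. -/
def Primitive (tt : TrainTrackRep T φ) : Prop :=
  ∀ x y : T.X, x ≠ y → ∃ N : ℕ, ∀ n ≥ N, ∀ z : T.X, ∃ g : G,
    T.smul g z ∈ tt.f^[n] '' T.seg x y

end TrainTrackRep

/-- A path in `T`, parametrized by arc length on the interval `[a,b]`. -/
structure PathIn (T : GTree G) where
  a : ℝ
  b : ℝ
  le : a ≤ b
  map : ℝ → T.X
  lip : ∀ s t, a ≤ s → s ≤ t → t ≤ b → T.dist (map s) (map t) ≤ t - s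
  arclength : ∀ s, a ≤ s → s < b → ∃ ε > 0, ∀ t, s ≤ t → t ≤ min (s + ε) b →
      T.dist (map s) (map t) = t - s

end GBSFormal

namespace GBSFormal

private lemma tdist_nonneg {G : Type*} [Group G] (T : GTree G) (x y : T.X) :
    0 ≤ T.dist x y := by
  have h2 := T.dist_triangle x y x
  rw [T.dist_self, T.dist_comm y x] at h2
  linarith

/-- Two equivariant (with the same `ψ`-twist) Lipschitz maps from a cobounded
tree are at uniformly bounded distance. -/
private lemma unif_bound {G : Type*} [Group G] (A Bt : GTree G) (x₀ : A.X) (r : ℝ)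
    (hcob : ∀ y, ∃ g, A.dist (A.smul g x₀) y ≤ r)
    (ψ : G → G) (F₁ F₂ : A.X → Bt.X) (K₁ K₂ : ℝ) (hK₁ : 0 ≤ K₁) (hK₂ : 0 ≤ K₂)
    (he₁ : ∀ g z, F₁ (A.smul g z) = Bt.smul (ψ g) (F₁ z))
    (he₂ : ∀ g z, F₂ (A.smul g z) = Bt.smul (ψ g) (F₂ z))
    (hl₁ : ∀ x y, Bt.dist (F₁ x) (F₁ y) ≤ K₁ * A.dist x y)
    (hl₂ : ∀ x y, Bt.dist (F₂ x) (F₂ y) ≤ K₂ * A.dist x y) :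
    ∀ z, Bt.dist (F₁ z) (F₂ z) ≤ K₁ * r + Bt.dist (F₁ x₀) (F₂ x₀) + K₂ * r := by
  intro z
  obtain ⟨g, hg⟩ := hcob z
  have h1 : Bt.dist (F₁ z) (F₁ (A.smul g x₀)) ≤ K₁ * r := by
    calc Bt.dist (F₁ z) (F₁ (A.smul g x₀)) ≤ K₁ * A.dist z (A.smul g x₀) := hl₁ _ _
      _ ≤ K₁ * r := by
          rw [A.dist_comm]
          exact mul_le_mul_of_nonneg_left hg hK₁
  have h2 : Bt.dist (F₁ (A.smul g x₀)) (F₂ (A.smul g x₀)) = Bt.dist (F₁ x₀) (F₂ x₀) := by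
    rw [he₁, he₂, Bt.isom]
  have h3 : Bt.dist (F₂ (A.smul g x₀)) (F₂ z) ≤ K₂ * r := by
    calc Bt.dist (F₂ (A.smul g x₀)) (F₂ z) ≤ K₂ * A.dist (A.smul g x₀) z := hl₂ _ _
      _ ≤ K₂ * r := mul_le_mul_of_nonneg_left hg hK₂
  have t1 := Bt.dist_triangle (F₁ z) (F₁ (A.smul g x₀)) (F₂ z)
  have t2 := Bt.dist_triangle (F₁ (A.smul g x₀)) (F₂ (A.smul g x₀)) (F₂ z)
  linarith

/-- The key lower bound: any equivariant `K`-Lipschitz map `S → S·φ` for a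
tree `S ∈ 𝒟` satisfies `λ ≤ K`, where `λ` is the stretch factor of a train
track representative of `φ`. -/
private lemma key_lower {G : Type*} [Group G] (S : DefSpace G) (φ : MulAut G)
    (TT : S.D) (tt : TrainTrackRep (S.tr TT) φ) (Sd : S.D) (K : ℝ) (hK0 : 0 ≤ K)
    (h : (S.tr Sd).X → (S.tr Sd).X)
    (heq : ∀ g x, h ((S.tr Sd).smul g x) = (S.tr Sd).smul (φ g) (h x))
    (hlip : ∀ x y, (S.tr Sd).dist (h x) (h y) ≤ K * (S.tr Sd).dist x y) :
    tt.lam ≤ K := by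
  obtain ⟨L, p, hL0, hpe, hpl⟩ := S.maps_exist TT Sd
  obtain ⟨M, q, hM0, hqe, hql⟩ := S.maps_exist Sd TT
  obtain ⟨x₀, r, hcobT⟩ := S.cobounded TT
  obtain ⟨y₀, r', hcobU⟩ := S.cobounded Sd
  have hlam1 := tt.lam_gt_one
  have hlam0 : (0:ℝ) < tt.lam := by linarith
  -- iterated Lipschitz bound for h
  have hiter : ∀ n a b, (S.tr Sd).dist (h^[n] a) (h^[n] b) ≤ K ^ n * (S.tr Sd).dist a b := by
    intro n
    induction n with
    | zero => intro a b; simp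
    | succ n ih =>
      intro a b
      rw [Function.iterate_succ_apply', Function.iterate_succ_apply']
      calc (S.tr Sd).dist (h (h^[n] a)) (h (h^[n] b)) ≤ K * (S.tr Sd).dist (h^[n] a) (h^[n] b) := hlip _ _
        _ ≤ K * (K ^ n * (S.tr Sd).dist a b) := mul_le_mul_of_nonneg_left (ih a b) hK0
        _ = K ^ (n + 1) * (S.tr Sd).dist a b := by ring
  -- uniform bound for f ∘ q versus q ∘ h
  have hBex : ∃ B, ∀ w, (S.tr TT).dist (tt.f (q w)) (q (h w)) ≤ B := by
    refine ⟨tt.lam * M * r' + (S.tr TT).dist (tt.f (q y₀)) (q (h y₀)) + M * K * r', ?_⟩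
    exact unif_bound (S.tr Sd) (S.tr TT) y₀ r' hcobU (fun g => φ g)
      (fun w => tt.f (q w)) (fun w => q (h w)) (tt.lam * M) (M * K)
      (mul_nonneg (le_of_lt hlam0) hM0) (mul_nonneg hM0 hK0)
      (fun g w => by rw [hqe, tt.equivariant])
      (fun g w => by rw [heq, hqe])
      (fun a b => by
        calc (S.tr TT).dist (tt.f (q a)) (tt.f (q b)) ≤ tt.lam * (S.tr TT).dist (q a) (q b) := tt.lip _ _
          _ ≤ tt.lam * (M * (S.tr Sd).dist a b) :=
              mul_le_mul_of_nonneg_left (hql a b) (le_of_lt hlam0)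
          _ = tt.lam * M * (S.tr Sd).dist a b := by ring)
      (fun a b => by
        calc (S.tr TT).dist (q (h a)) (q (h b)) ≤ M * (S.tr Sd).dist (h a) (h b) := hql _ _
          _ ≤ M * (K * (S.tr Sd).dist a b) := mul_le_mul_of_nonneg_left (hlip a b) hM0
          _ = M * K * (S.tr Sd).dist a b := by ring)
  obtain ⟨B, hB⟩ := hBex
  -- uniform bound between f^[n] and q ∘ h^[n] ∘ p
  have hA : ∀ n, ∃ C, ∀ z, (S.tr TT).dist (tt.f^[n] z) (q (h^[n] (p z))) ≤ C := by
    intro n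
    induction n with
    | zero =>
      refine ⟨1 * r + (S.tr TT).dist x₀ (q (p x₀)) + M * L * r, ?_⟩
      intro z
      have := unif_bound (S.tr TT) (S.tr TT) x₀ r hcobT (fun g => g) (fun z => z)
        (fun z => q (p z)) 1 (M * L) zero_le_one (mul_nonneg hM0 hL0)
        (fun g z => rfl) (fun g z => by rw [hpe, hqe])
        (fun a b => by rw [one_mul]) (fun a b => by
          calc (S.tr TT).dist (q (p a)) (q (p b)) ≤ M * (S.tr Sd).dist (p a) (p b) := hql _ _
            _ ≤ M * (L * (S.tr TT).dist a b) := mul_le_mul_of_nonneg_left (hpl a b) hM0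
            _ = M * L * (S.tr TT).dist a b := by ring) z
      simpa using this
    | succ n ih =>
      obtain ⟨C, hC⟩ := ih
      refine ⟨tt.lam * C + B, ?_⟩
      intro z
      rw [Function.iterate_succ_apply', Function.iterate_succ_apply']
      have h1 : (S.tr TT).dist (tt.f (tt.f^[n] z)) (tt.f (q (h^[n] (p z)))) ≤ tt.lam * C :=
        le_trans (tt.lip _ _) (mul_le_mul_of_nonneg_left (hC z) (le_of_lt hlam0))
      have h2 := hB (h^[n] (p z))
      have h3 := (S.tr TT).dist_triangle (tt.f (tt.f^[n] z)) (tt.f (q (h^[n] (p z))))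
        (q (h (h^[n] (p z))))
      linarith
  -- the legal segment and its stretched iterates
  obtain ⟨x, y, hxy, hleg⟩ := tt.exists_legal
  have hd0 : 0 < (S.tr TT).dist x y :=
    lt_of_le_of_ne (tdist_nonneg (S.tr TT) x y) (fun hc => hxy ((S.tr TT).eq_of_dist x y hc.symm))
  have key2 : ∀ n : ℕ, tt.lam ^ n ≤ M * L * K ^ n := by
    intro n
    by_contra hlt
    push_neg at hlt
    obtain ⟨C, hC⟩ := hA n
    have hε : 0 < (tt.lam ^ n - M * L * K ^ n) * (S.tr TT).dist x y := by
      apply mul_pos _ hd0; linarith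
    obtain ⟨m, hm⟩ := pow_unbounded_of_one_lt
      (2 * C / ((tt.lam ^ n - M * L * K ^ n) * (S.tr TT).dist x y)) hlam1
    rw [div_lt_iff₀ hε] at hm
    set u := tt.f^[m] x with hu
    set v := tt.f^[m] y with hv
    have e1 : (S.tr TT).dist (tt.f^[n] u) (tt.f^[n] v) = tt.lam ^ n * tt.lam ^ m * (S.tr TT).dist x y := by
      rw [hu, hv, ← Function.iterate_add_apply, ← Function.iterate_add_apply,
        hleg (n + m), pow_add]
    have e2 : (S.tr TT).dist u v = tt.lam ^ m * (S.tr TT).dist x y := hleg m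
    have b1 := hC u
    have b2 := hC v
    have b3 : (S.tr TT).dist (q (h^[n] (p u))) (q (h^[n] (p v)))
        ≤ M * L * K ^ n * (tt.lam ^ m * (S.tr TT).dist x y) := by
      calc (S.tr TT).dist (q (h^[n] (p u))) (q (h^[n] (p v)))
          ≤ M * (S.tr Sd).dist (h^[n] (p u)) (h^[n] (p v)) := hql _ _
        _ ≤ M * (K ^ n * (S.tr Sd).dist (p u) (p v)) :=
            mul_le_mul_of_nonneg_left (hiter n _ _) hM0
        _ ≤ M * (K ^ n * (L * (S.tr TT).dist u v)) := by
            refine mul_le_mul_of_nonneg_left ?_ hM0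
            exact mul_le_mul_of_nonneg_left (hpl u v) (pow_nonneg hK0 n)
        _ = M * L * K ^ n * (S.tr TT).dist u v := by ring
        _ = M * L * K ^ n * (tt.lam ^ m * (S.tr TT).dist x y) := by rw [e2]
    have b2' : (S.tr TT).dist (q (h^[n] (p v))) (tt.f^[n] v) ≤ C := by
      rw [(S.tr TT).dist_comm]; exact b2
    have tri1 := (S.tr TT).dist_triangle (tt.f^[n] u) (q (h^[n] (p u))) (tt.f^[n] v)
    have tri2 := (S.tr TT).dist_triangle (q (h^[n] (p u))) (q (h^[n] (p v))) (tt.f^[n] v)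
    nlinarith [e1, b1, b2', b3, tri1, tri2, hm]
  -- conclude λ ≤ K
  by_contra hc
  push_neg at hc
  rcases eq_or_lt_of_le hK0 with hK | hK
  · have h4 := key2 1
    rw [pow_one, pow_one, ← hK, mul_zero] at h4
    linarith
  · have h1 : 1 < tt.lam / K := (one_lt_div hK).2 hc
    obtain ⟨m, hm⟩ := pow_unbounded_of_one_lt (M * L) h1
    have hKm : 0 < K ^ m := pow_pos hK m
    have h2 : M * L * K ^ m < (tt.lam / K) ^ m * K ^ m := mul_lt_mul_of_pos_right hm hKm
    have h3 : (tt.lam / K) ^ m * K ^ m = tt.lam ^ m := by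
      rw [div_pow]
      field_simp
    rw [h3] at h2
    linarith [key2 m]

/-- Let `φ ∈ Out(G)` have a train track representative `f : T → T` with primitive
transition matrix (expressed metrically: iterated images of any nondegenerate
segment eventually meet every `G`-orbit), `T ∈ 𝒟`.  Then
`Lip(f) = Lip(T, T·φ) = min_{S ∈ 𝒟} Lip(S, S·φ)`, where `Lip(f) = λ` is the
stretch factor of `f` and `S·φ` denotes the tree `S` with action twisted
by `φ`. -/
theorem stmt9 {G : Type*} [Group G] (S : DefSpace G) (φ : MulAut G)
    (TT : S.D) (tt : TrainTrackRep (S.tr TT) φ) (hprim : tt.Primitive) :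
    tt.lam = lipConst (S.tr TT) ((S.tr TT).twist φ) ∧
    ∀ Sd : S.D, tt.lam ≤ lipConst (S.tr Sd) ((S.tr Sd).twist φ) := by
  have lower : ∀ Sd : S.D, tt.lam ≤ lipConst (S.tr Sd) ((S.tr Sd).twist φ) := by
    intro Sd
    apply le_csInf
    · obtain ⟨K, f, hK, hf, hl⟩ := S.maps_exist Sd (S.act Sd φ)
      refine ⟨K, hK, ?_⟩
      rw [← S.act_tr Sd φ]
      exact ⟨f, hf, hl⟩
    · rintro K ⟨hK0, f, hf, hl⟩
      exact key_lower S φ TT tt Sd K hK0 f hf hl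
  refine ⟨le_antisymm (lower TT) ?_, lower⟩
  apply csInf_le
  · exact ⟨0, fun K hK => hK.1⟩
  · exact ⟨by linarith [tt.lam_gt_one], tt.f, tt.equivariant, tt.lip⟩

end GBSFormal
end

section
/- Let f : T → T be a train track representative of φ ∈ Out(G) with primitive transition matrix and stretch factor λ. Then there exists a loxodromic element h ∈ G whose axis in T is f-legal, and for every n ∈ ℕ one has ‖φⁿ(h)‖_T = λⁿ·‖h‖_T; consequently Lip(T, T·φⁿ) = λⁿ for every n ∈ ℕ. -/
namespace GBSFormal

namespace S16

variable {G : Type*} [Group G]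

section TreeBasics

variable (T : GTree G)

lemma dnn (x y : T.X) : 0 ≤ T.dist x y := by
  have h := T.dist_triangle x x y
  have h2 := T.dist_comm x y
  have h3 := T.dist_self x
  nlinarith [T.dist_triangle x y x, T.dist_comm y x]

lemma dist_pos {x y : T.X} (h : x ≠ y) : 0 < T.dist x y := by
  rcases lt_or_eq_of_le (dnn T x y) with h' | h'
  · exact h'
  · exact absurd (T.eq_of_dist x y h'.symm) h

lemma ne_of_dist_pos {x y : T.X} (h : 0 < T.dist x y) : x ≠ y := by
  rintro rfl; rw [T.dist_self] at h; exact lt_irrefl _ h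

/-- Betweenness: `b` lies on the segment `[a,c]`. -/
def Btw (a b c : T.X) : Prop := T.dist a b + T.dist b c = T.dist a c

lemma btw_iff_seg {a b c : T.X} : Btw T a b c ↔ b ∈ T.seg a c := Iff.rfl

lemma btw_symm {a b c : T.X} (h : Btw T a b c) : Btw T c b a := by
  unfold Btw at *
  rw [T.dist_comm c b, T.dist_comm b a, T.dist_comm c a]
  linarith

lemma btw_self_left (a c : T.X) : Btw T a a c := by
  unfold Btw; rw [T.dist_self]; ring

lemma btw_self_right (a c : T.X) : Btw T a c c := by
  unfold Btw; rw [T.dist_self]; ring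

/-- The Gromov product of `x, y` at the basepoint `w`. -/
noncomputable def gp (w x y : T.X) : ℝ := (T.dist w x + T.dist w y - T.dist x y) / 2

lemma gp_nonneg (w x y : T.X) : 0 ≤ gp T w x y := by
  have h := T.dist_triangle x w y
  have := T.dist_comm x w
  unfold gp; linarith

lemma gp_comm (w x y : T.X) : gp T w x y = gp T w y x := by
  unfold gp; rw [T.dist_comm x y]; ring

lemma gp_le_left (w x y : T.X) : gp T w x y ≤ T.dist w x := by
  have h := T.dist_triangle w x y
  have h2 := T.dist_comm w y
  have h3 := T.dist_triangle y w x -- unused maybe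
  have h4 := T.dist_triangle w y x
  have h5 := T.dist_comm x y
  unfold gp; nlinarith [T.dist_triangle w y x, T.dist_comm y x]

lemma btw_iff_gp {a b c : T.X} : Btw T a b c ↔ gp T b a c = 0 := by
  unfold Btw gp
  rw [T.dist_comm b a]
  constructor <;> intro h <;> linarith

/-- `0`-hyperbolicity in Gromov product form. -/
lemma gp_min (w x y z : T.X) : min (gp T w x y) (gp T w y z) ≤ gp T w x z := by
  have h := T.four_point x z w y
  rcases le_max_iff.mp h with h' | h'
  · apply min_le_iff.mpr; right
    unfold gp
    have c1 := T.dist_comm z y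
    have c2 := T.dist_comm x w
    have c3 := T.dist_comm w y
    have c4 := T.dist_comm w z
    linarith
  · apply min_le_iff.mpr; left
    unfold gp
    have c1 := T.dist_comm z w
    have c2 := T.dist_comm w y
    have c3 := T.dist_comm x y
    linarith

/-- Betweenness composition lemmas (pure metric arithmetic). -/
lemma btw_comp1 {a b c d : T.X} (h1 : Btw T a b c) (h2 : Btw T a c d) : Btw T b c d := by
  unfold Btw at *
  have t1 := T.dist_triangle b c d
  have t2 := T.dist_triangle a b d
  linarith

lemma btw_comp2 {a b c d : T.X} (h1 : Btw T a b c) (h2 : Btw T a c d) : Btw T a b d := by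
  unfold Btw at *
  have t1 := T.dist_triangle b c d
  have t2 := T.dist_triangle a b d
  linarith

/-- From `Btw a b d` and `Btw b c d` conclude `Btw a b c` and `Btw a c d`. -/
lemma btw_comp4 {a b c d : T.X} (h1 : Btw T a b d) (h2 : Btw T b c d) :
    Btw T a b c ∧ Btw T a c d := by
  unfold Btw at *
  have t1 := T.dist_triangle a b c
  have t2 := T.dist_triangle a c d
  constructor <;> linarith

/-- From `Btw x a b` and `Btw x b c` conclude `Btw x a c` and `Btw a b c`. -/
lemma btw_chain {x a b c : T.X} (h1 : Btw T x a b) (h2 : Btw T x b c) :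
    Btw T x a c ∧ Btw T a b c := by
  unfold Btw at *
  have t1 := T.dist_triangle a b c
  have t2 := T.dist_triangle x a c
  constructor <;> linarith

/-- The gluing lemma: if `B` is between `a'` and `c'`, with `a'` on `[A,B]`
and `c'` on `[B,C]` nondegenerately, then `B` is between `A` and `C`. -/
lemma btw_glue {A a' B c' C : T.X} (h1 : Btw T A a' B) (h2 : Btw T a' B c')
    (h3 : Btw T B c' C) (ha : a' ≠ B) (hc : c' ≠ B) : Btw T A B C := by
  have hgp2 : gp T B a' c' = 0 := (btw_iff_gp T).mp h2
  have ha'A : gp T B a' A = T.dist B a' := by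
    unfold Btw at h1; unfold gp
    have := T.dist_comm A a'
    have := T.dist_comm B A
    have := T.dist_comm a' B
    linarith
  have hpos : 0 < T.dist B a' := by
    have := dist_pos T ha; have := T.dist_comm a' B; linarith
  have key1 : gp T B A c' = 0 := by
    have hmin := gp_min T B a' A c'
    have hnn := gp_nonneg T B A c'
    rw [ha'A, hgp2] at hmin
    rcases min_le_iff.mp hmin with h | h
    · linarith
    · linarith
  have hc'C : gp T B c' C = T.dist B c' := by
    unfold Btw at h3; unfold gp
    have := T.dist_comm c' C
    linarith
  have hposc : 0 < T.dist B c' := by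
    have := dist_pos T hc; have := T.dist_comm c' B; linarith
  have key2 : gp T B A C = 0 := by
    have hmin := gp_min T B A C c'
    have hnn := gp_nonneg T B A C
    have hcomm : gp T B C c' = gp T B c' C := gp_comm T B C c'
    rw [key1] at hmin
    rw [hcomm, hc'C] at hmin
    rcases min_le_iff.mp hmin with h | h
    · linarith
    · linarith
  exact (btw_iff_gp T).mpr key2

end TreeBasics


section TreeBasics2

variable (T : GTree G)

/-- Interval ordering: two points on a segment, ordered by distance to the left
endpoint, with the resulting betweenness relations and distance formula. -/
lemma btw_pair {a b u v : T.X} (hu : Btw T a u b) (hv : Btw T a v b)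
    (h : T.dist a u ≤ T.dist a v) :
    Btw T a u v ∧ Btw T u v b ∧ T.dist u v = T.dist a v - T.dist a u := by
  have h4 := T.four_point u v a b
  have c1 := T.dist_comm u a
  have c2 := T.dist_comm v a
  have c3 := T.dist_comm a b
  have c4 := T.dist_comm v b
  have c5 := T.dist_comm u b
  have t1 := T.dist_triangle a u v
  have t2 := T.dist_triangle a v u
  have c6 := T.dist_comm u v
  unfold Btw at *
  have hup : T.dist u v ≤ T.dist a v - T.dist a u := by
    rcases le_max_iff.mp h4 with h' | h' <;> linarith
  have hdn : T.dist a v - T.dist a u ≤ T.dist u v := by linarith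
  have heq : T.dist u v = T.dist a v - T.dist a u := le_antisymm hup hdn
  refine ⟨by linarith, by linarith, heq⟩

lemma btw_unique {a b u v : T.X} (hu : Btw T a u b) (hv : Btw T a v b)
    (h : T.dist a u = T.dist a v) : u = v := by
  have h1 := btw_pair T hu hv (le_of_eq h)
  apply T.eq_of_dist
  rw [h1.2.2]; linarith

/-- Existence of the point at distance `t` from `a` on `[a,b]`. -/
lemma exists_btw_dist (a b : T.X) (t : ℝ) (h0 : 0 ≤ t) (ht : t ≤ T.dist a b) :
    ∃ p, Btw T a p b ∧ T.dist a p = t := by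
  obtain ⟨γ, hγ0, hγd, hiso⟩ := T.geodesic a b
  have hd0 : (0:ℝ) ≤ T.dist a b := dnn T a b
  refine ⟨γ t, ?_, ?_⟩
  · have h1 : T.dist a (γ t) = t := by
      conv_lhs => rw [← hγ0]
      rw [hiso 0 t le_rfl hd0 h0 ht]
      simp [abs_of_nonpos, h0, abs_of_nonneg]
    have h2 : T.dist (γ t) b = T.dist a b - t := by
      conv_lhs => rw [← hγd]
      rw [hiso t (T.dist a b) h0 ht hd0 le_rfl]
      rw [abs_of_nonpos (by linarith)]; ring
    unfold Btw; rw [h1, h2]; ring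
  · conv_lhs => rw [← hγ0]
    rw [hiso 0 t le_rfl hd0 h0 ht]
    simp [abs_of_nonneg h0]

lemma dist_smul (g : G) (u v : T.X) : T.dist (T.smul g u) (T.smul g v) = T.dist u v :=
  T.isom g u v

lemma smul_smul' (g g' : G) (x : T.X) : T.smul g (T.smul g' x) = T.smul (g * g') x :=
  (T.smul_mul g g' x).symm

lemma smul_cancel (g : G) (x : T.X) : T.smul g⁻¹ (T.smul g x) = x := by
  rw [smul_smul', inv_mul_cancel, T.smul_one]

lemma smul_cancel' (g : G) (x : T.X) : T.smul g (T.smul g⁻¹ x) = x := by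
  rw [smul_smul', mul_inv_cancel, T.smul_one]

lemma btw_smul {a b c : T.X} (g : G) (h : Btw T a b c) :
    Btw T (T.smul g a) (T.smul g b) (T.smul g c) := by
  unfold Btw at *; rw [dist_smul, dist_smul, dist_smul]; exact h

lemma smul_pow_succ (h : G) (m : ℕ) (x : T.X) :
    T.smul (h ^ (m+1)) x = T.smul (h ^ m) (T.smul h x) := by
  rw [smul_smul', ← pow_succ]

lemma smul_pow_succ' (h : G) (m : ℕ) (x : T.X) :
    T.smul (h ^ (m+1)) x = T.smul h (T.smul (h ^ m) x) := by
  rw [smul_smul', ← pow_succ']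

lemma smul_pow_add (h : G) (i j : ℕ) (x : T.X) :
    T.smul (h ^ i) (T.smul (h ^ j) x) = T.smul (h ^ (i + j)) x := by
  rw [smul_smul', ← pow_add]

lemma smul_inv_pow_cancel (h : G) (m : ℕ) (x : T.X) :
    T.smul (h ^ m) (T.smul ((h⁻¹) ^ m) x) = x := by
  rw [smul_smul', inv_pow, mul_inv_cancel, T.smul_one]

end TreeBasics2


section Legality

variable {T : GTree G} {φ : MulAut G} (tt : TrainTrackRep T φ)

lemma lam_pos : 0 < tt.lam := lt_trans one_pos tt.lam_gt_one

lemma lam_pow_pos (m : ℕ) : 0 < tt.lam ^ m := pow_pos (lam_pos tt) m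

/-- Iterated equivariance. -/
lemma iter_equiv (m : ℕ) (g : G) (x : T.X) :
    tt.f^[m] (T.smul g x) = T.smul ((φ ^ m : MulAut G) g) (tt.f^[m] x) := by
  induction m with
  | zero => simp only [Function.iterate_zero_apply, pow_zero]; rfl
  | succ m ih =>
      rw [Function.iterate_succ_apply', Function.iterate_succ_apply', ih, tt.equivariant]
      congr 1
      rw [pow_succ']; rfl

/-- Iterated Lipschitz bound. -/
lemma lip_iter (m : ℕ) (x y : T.X) :
    T.dist (tt.f^[m] x) (tt.f^[m] y) ≤ tt.lam ^ m * T.dist x y := by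
  induction m with
  | zero => simp
  | succ m ih =>
      rw [Function.iterate_succ_apply', Function.iterate_succ_apply']
      calc T.dist (tt.f (tt.f^[m] x)) (tt.f (tt.f^[m] y))
          ≤ tt.lam * T.dist (tt.f^[m] x) (tt.f^[m] y) := tt.lip _ _
        _ ≤ tt.lam * (tt.lam ^ m * T.dist x y) := by
            apply mul_le_mul_of_nonneg_left ih (le_of_lt (lam_pos tt))
        _ = tt.lam ^ (m+1) * T.dist x y := by ring

lemma legal_refl (x : T.X) : tt.LegalSeg x x := by
  intro m; rw [T.dist_self, T.dist_self]; ring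

lemma legal_symm {x y : T.X} (h : tt.LegalSeg x y) : tt.LegalSeg y x := by
  intro m
  rw [T.dist_comm (tt.f^[m] y), T.dist_comm y x]
  exact h m

lemma legal_smul {x y : T.X} (g : G) (h : tt.LegalSeg x y) :
    tt.LegalSeg (T.smul g x) (T.smul g y) := by
  intro m
  rw [iter_equiv, iter_equiv, dist_smul, dist_smul]
  exact h m

/-- Subsegment scaling: a point between the ends of a legal segment has
exactly scaled images, staying between the images. -/
lemma legal_sub1 {A B z : T.X} (hL : tt.LegalSeg A B) (hz : Btw T A z B) (m : ℕ) :
    T.dist (tt.f^[m] A) (tt.f^[m] z) = tt.lam ^ m * T.dist A z ∧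
    T.dist (tt.f^[m] z) (tt.f^[m] B) = tt.lam ^ m * T.dist z B ∧
    Btw T (tt.f^[m] A) (tt.f^[m] z) (tt.f^[m] B) := by
  have h1 := lip_iter tt m A z
  have h2 := lip_iter tt m z B
  have h3 := hL m
  have ht := T.dist_triangle (tt.f^[m] A) (tt.f^[m] z) (tt.f^[m] B)
  have hz' : T.dist A z + T.dist z B = T.dist A B := hz
  have hmul : tt.lam ^ m * T.dist A z + tt.lam ^ m * T.dist z B = tt.lam ^ m * T.dist A B := by
    rw [← mul_add, hz']
  have e1 : T.dist (tt.f^[m] A) (tt.f^[m] z) = tt.lam ^ m * T.dist A z := by linarith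
  have e2 : T.dist (tt.f^[m] z) (tt.f^[m] B) = tt.lam ^ m * T.dist z B := by linarith
  refine ⟨e1, e2, ?_⟩
  unfold Btw
  rw [e1, e2, h3]
  linarith

/-- Two points between the ends of a legal segment span a legal segment. -/
lemma legal_sub2 {A B u v : T.X} (hL : tt.LegalSeg A B) (hu : Btw T A u B)
    (hv : Btw T A v B) : tt.LegalSeg u v := by
  rcases le_total (T.dist A u) (T.dist A v) with h | h
  · intro m
    obtain ⟨hu1, _, hu3⟩ := legal_sub1 tt hL hu m
    obtain ⟨hv1, _, hv3⟩ := legal_sub1 tt hL hv m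
    have him : T.dist (tt.f^[m] A) (tt.f^[m] u) ≤ T.dist (tt.f^[m] A) (tt.f^[m] v) := by
      rw [hu1, hv1]
      exact mul_le_mul_of_nonneg_left h (le_of_lt (lam_pow_pos tt m))
    have h1 := (btw_pair T hu3 hv3 him).2.2
    have h2 := (btw_pair T hu hv h).2.2
    rw [h1, h2, hu1, hv1]; ring
  · intro m
    obtain ⟨hu1, _, hu3⟩ := legal_sub1 tt hL hu m
    obtain ⟨hv1, _, hv3⟩ := legal_sub1 tt hL hv m
    have him : T.dist (tt.f^[m] A) (tt.f^[m] v) ≤ T.dist (tt.f^[m] A) (tt.f^[m] u) := by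
      rw [hu1, hv1]
      exact mul_le_mul_of_nonneg_left h (le_of_lt (lam_pow_pos tt m))
    have h1 := (btw_pair T hv3 hu3 him).2.2
    have h2 := (btw_pair T hv hu h).2.2
    have c1 := T.dist_comm (tt.f^[m] u) (tt.f^[m] v)
    have c2 := T.dist_comm u v
    rw [c1, c2, h1, h2, hu1, hv1]; ring

/-- Concatenation of legal segments through a legal turn is legal. -/
lemma legal_concat {A B C a' c' : T.X} (hAB : tt.LegalSeg A B) (hBC : tt.LegalSeg B C)
    (ha'1 : Btw T A a' B) (ha'2 : a' ≠ B) (hc'1 : Btw T B c' C) (hc'2 : c' ≠ B)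
    (hW : tt.LegalSeg a' c') (hWb : Btw T a' B c') :
    tt.LegalSeg A C ∧ Btw T A B C := by
  have key : ∀ m, Btw T (tt.f^[m] A) (tt.f^[m] B) (tt.f^[m] C) := by
    intro m
    have h1 := (legal_sub1 tt hAB ha'1 m).2.2
    have h2 := (legal_sub1 tt hW hWb m).2.2
    have h3 := (legal_sub1 tt hBC hc'1 m).2.2
    have hne1 : tt.f^[m] a' ≠ tt.f^[m] B := by
      apply ne_of_dist_pos
      rw [(legal_sub1 tt hAB ha'1 m).2.1]
      exact mul_pos (lam_pow_pos tt m) (dist_pos T ha'2)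
    have hne2 : tt.f^[m] c' ≠ tt.f^[m] B := by
      apply ne_of_dist_pos
      have := (legal_sub1 tt hBC hc'1 m).1
      rw [T.dist_comm]
      rw [this]
      exact mul_pos (lam_pow_pos tt m) (by rw [T.dist_comm]; exact dist_pos T hc'2)
    exact btw_glue T h1 h2 h3 hne1 hne2
  have hbtw0 := key 0
  simp only [Function.iterate_zero_apply] at hbtw0
  refine ⟨?_, hbtw0⟩
  intro m
  have hm := key m
  unfold Btw at hm hbtw0
  rw [hAB m, hBC m] at hm
  rw [← hbtw0, mul_add]
  linarith [hm]

/-- Cancellation at a turn between two legal legs grows at least by `λ`. -/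
lemma cancel_mono {q u v : T.X} (hqu : tt.LegalSeg q u) (hqv : tt.LegalSeg q v) (m : ℕ) :
    tt.lam * gp T (tt.f^[m] q) (tt.f^[m] u) (tt.f^[m] v) ≤
      gp T (tt.f^[m+1] q) (tt.f^[m+1] u) (tt.f^[m+1] v) := by
  set c := gp T (tt.f^[m] q) (tt.f^[m] u) (tt.f^[m] v) with hc
  have hc0 : 0 ≤ c := gp_nonneg T _ _ _
  have hcu : c ≤ tt.lam ^ m * T.dist q u := by
    calc c ≤ T.dist (tt.f^[m] q) (tt.f^[m] u) := gp_le_left T _ _ _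
      _ = tt.lam ^ m * T.dist q u := hqu m
  have hcv : c ≤ tt.lam ^ m * T.dist q v := by
    rw [hc, gp_comm]
    calc gp T (tt.f^[m] q) (tt.f^[m] v) (tt.f^[m] u)
        ≤ T.dist (tt.f^[m] q) (tt.f^[m] v) := gp_le_left T _ _ _
      _ = tt.lam ^ m * T.dist q v := hqv m
  have hlp := lam_pow_pos tt m
  -- points P' on [q,u] and P'' on [q,v] at distance c/λ^m from q
  obtain ⟨P', hP'b, hP'd⟩ := exists_btw_dist T q u (c / tt.lam ^ m)
    (div_nonneg hc0 (le_of_lt hlp)) (by rw [div_le_iff₀ hlp]; linarith [hqu 0, hcu])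
  obtain ⟨P'', hP''b, hP''d⟩ := exists_btw_dist T q v (c / tt.lam ^ m)
    (div_nonneg hc0 (le_of_lt hlp)) (by rw [div_le_iff₀ hlp]; linarith [hqv 0, hcv])
  -- images at stage m
  obtain ⟨hA1, hA2, hA3⟩ := legal_sub1 tt hqu hP'b m
  obtain ⟨hB1, hB2, hB3⟩ := legal_sub1 tt hqv hP''b m
  have hdA : T.dist (tt.f^[m] q) (tt.f^[m] P') = c := by
    rw [hA1, hP'd]; field_simp
  have hdB : T.dist (tt.f^[m] q) (tt.f^[m] P'') = c := by
    rw [hB1, hP''d]; field_simp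
  -- gp computations at stage m, base f^[m] q
  have g1 : gp T (tt.f^[m] q) (tt.f^[m] P') (tt.f^[m] u) = c := by
    unfold Btw at hA3; unfold gp
    rw [hdA]; linarith
  have g2 : gp T (tt.f^[m] q) (tt.f^[m] P'') (tt.f^[m] v) = c := by
    unfold Btw at hB3; unfold gp
    rw [hdB]; linarith
  -- the two midpoints agree
  have hmid : tt.f^[m] P' = tt.f^[m] P'' := by
    have hmin1 := gp_min T (tt.f^[m] q) (tt.f^[m] u) (tt.f^[m] v) (tt.f^[m] P'')
    have hmin2 := gp_min T (tt.f^[m] q) (tt.f^[m] P') (tt.f^[m] u) (tt.f^[m] P'')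
    have e1 : gp T (tt.f^[m] q) (tt.f^[m] v) (tt.f^[m] P'') = c := by
      rw [gp_comm]; exact g2
    have e2 : gp T (tt.f^[m] q) (tt.f^[m] u) (tt.f^[m] v) = c := hc.symm
    rw [e1, e2] at hmin1
    simp only [min_self] at hmin1
    have hge : c ≤ gp T (tt.f^[m] q) (tt.f^[m] P') (tt.f^[m] P'') := by
      rcases min_le_iff.mp hmin2 with h | h
      · rw [g1] at h; linarith
      · linarith
    have hgp : gp T (tt.f^[m] q) (tt.f^[m] P') (tt.f^[m] P'') =
        (T.dist (tt.f^[m] q) (tt.f^[m] P') + T.dist (tt.f^[m] q) (tt.f^[m] P'')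
          - T.dist (tt.f^[m] P') (tt.f^[m] P'')) / 2 := rfl
    apply T.eq_of_dist
    have hnn := dnn T (tt.f^[m] P') (tt.f^[m] P'')
    rw [hgp, hdA, hdB] at hge
    linarith
  -- conclusion at stage m+1
  have hA1' := (legal_sub1 tt hqu hP'b (m+1)).1
  have hA3' := (legal_sub1 tt hqu hP'b (m+1)).2.2
  have hB1' := (legal_sub1 tt hqv hP''b (m+1)).1
  have hB3' := (legal_sub1 tt hqv hP''b (m+1)).2.2
  have hdA' : T.dist (tt.f^[m+1] q) (tt.f^[m+1] P') = tt.lam * c := by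
    rw [hA1', hP'd, pow_succ]; field_simp
  have hdB' : T.dist (tt.f^[m+1] q) (tt.f^[m+1] P'') = tt.lam * c := by
    rw [hB1', hP''d, pow_succ]; field_simp
  have g1' : gp T (tt.f^[m+1] q) (tt.f^[m+1] u) (tt.f^[m+1] P') = tt.lam * c := by
    unfold Btw at hA3'; unfold gp
    rw [T.dist_comm (tt.f^[m+1] u) (tt.f^[m+1] P')]
    rw [hdA']
    linarith
  have g2' : gp T (tt.f^[m+1] q) (tt.f^[m+1] P') (tt.f^[m+1] v) = tt.lam * c := by
    have hPP : tt.f^[m+1] P' = tt.f^[m+1] P'' := by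
      rw [Function.iterate_succ_apply', Function.iterate_succ_apply', hmid]
    rw [hPP]
    unfold Btw at hB3'; unfold gp
    rw [hdB']
    linarith
  have hmin := gp_min T (tt.f^[m+1] q) (tt.f^[m+1] u) (tt.f^[m+1] P') (tt.f^[m+1] v)
  rw [g1', g2'] at hmin
  simpa using hmin

/-- An (endpoint-anchored) illegal turn: some iterate produces cancellation. -/
def Ill (u q v : T.X) : Prop := ∃ m, 0 < gp T (tt.f^[m] q) (tt.f^[m] u) (tt.f^[m] v)

lemma ill_mono {q u v : T.X} (hqu : tt.LegalSeg q u) (hqv : tt.LegalSeg q v)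
    {m : ℕ} (h : 0 < gp T (tt.f^[m] q) (tt.f^[m] u) (tt.f^[m] v)) :
    ∀ k, m ≤ k → 0 < gp T (tt.f^[k] q) (tt.f^[k] u) (tt.f^[k] v) := by
  intro k hk
  induction k with
  | zero => simpa [Nat.le_zero.mp hk] using h
  | succ k ih =>
      rcases Nat.lt_or_ge m (k+1) with h' | h'
      · have hik := ih (Nat.lt_succ_iff.mp h')
        have := cancel_mono tt hqu hqv k
        nlinarith [lam_pos tt]
      · have : m = k + 1 := le_antisymm hk h'
        rw [← this]; exact h

/-- The gate dichotomy: the backward leg makes a legal turn with at least one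
of the two sides of a legal segment through `q`. -/
lemma ill_or {q u ep em : T.X} (hqu : tt.LegalSeg q u) (hep : tt.LegalSeg q ep)
    (hem : tt.LegalSeg q em) (hbe : Btw T em q ep) (hle : tt.LegalSeg em ep) :
    ¬ Ill tt u q ep ∨ ¬ Ill tt u q em := by
  by_contra hcon
  push_neg at hcon
  obtain ⟨⟨m1, h1⟩, ⟨m2, h2⟩⟩ := hcon
  set M := max m1 m2
  have hp1 : 0 < gp T (tt.f^[M] q) (tt.f^[M] u) (tt.f^[M] ep) :=
    ill_mono tt hqu hep h1 M (le_max_left _ _)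
  have hp2 : 0 < gp T (tt.f^[M] q) (tt.f^[M] u) (tt.f^[M] em) :=
    ill_mono tt hqu hem h2 M (le_max_right _ _)
  have hzero : gp T (tt.f^[M] q) (tt.f^[M] em) (tt.f^[M] ep) = 0 := by
    have := (legal_sub1 tt hle hbe M).2.2
    exact (btw_iff_gp T).mp this
  have hmin := gp_min T (tt.f^[M] q) (tt.f^[M] em) (tt.f^[M] u) (tt.f^[M] ep)
  rw [hzero] at hmin
  have hc : gp T (tt.f^[M] q) (tt.f^[M] em) (tt.f^[M] u)
      = gp T (tt.f^[M] q) (tt.f^[M] u) (tt.f^[M] em) := gp_comm T _ _ _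
  rw [hc] at hmin
  rcases min_le_iff.mp hmin with h | h
  · linarith
  · linarith

/-- A non-illegal turn between legal legs gives a legal concatenation. -/
lemma legal_of_not_ill {q u v : T.X} (hqu : tt.LegalSeg q u) (hqv : tt.LegalSeg q v)
    (h : ¬ Ill tt u q v) : tt.LegalSeg u v ∧ Btw T u q v := by
  have hz : ∀ m, gp T (tt.f^[m] q) (tt.f^[m] u) (tt.f^[m] v) = 0 := by
    intro m
    by_contra h'
    exact h ⟨m, lt_of_le_of_ne (gp_nonneg T _ _ _) (Ne.symm h')⟩
  have hadd : ∀ m, T.dist (tt.f^[m] u) (tt.f^[m] v)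
      = T.dist (tt.f^[m] u) (tt.f^[m] q) + T.dist (tt.f^[m] q) (tt.f^[m] v) := by
    intro m
    have := hz m
    unfold gp at this
    have c := T.dist_comm (tt.f^[m] q) (tt.f^[m] u)
    linarith
  have hbtw : Btw T u q v := by
    have h0 := hadd 0
    simp only [Function.iterate_zero_apply] at h0
    show T.dist u q + T.dist q v = T.dist u v
    linarith
  refine ⟨?_, hbtw⟩
  intro m
  have := hadd m
  rw [T.dist_comm (tt.f^[m] u) (tt.f^[m] q), hqu m, hqv m] at this
  rw [this]
  have hb : T.dist u q + T.dist q v = T.dist u v := hbtw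
  rw [← hb, T.dist_comm u q, mul_add]

end Legality


section TransLength

variable (T : GTree G)

lemma tl_le_dist (g : G) (z : T.X) : T.tl g ≤ T.dist z (T.smul g z) := by
  apply csInf_le
  · exact ⟨0, by rintro b ⟨w, rfl⟩; exact dnn T _ _⟩
  · exact ⟨z, rfl⟩

lemma disp_pow_le (g : G) (z : T.X) (m : ℕ) :
    T.dist z (T.smul (g ^ m) z) ≤ m * T.dist z (T.smul g z) := by
  induction m with
  | zero => simp [pow_zero, T.smul_one, T.dist_self]
  | succ m ih =>
      have ht := T.dist_triangle z (T.smul g z) (T.smul (g ^ (m+1)) z)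
      have h2 : T.dist (T.smul g z) (T.smul (g ^ (m+1)) z) = T.dist z (T.smul (g ^ m) z) := by
        rw [smul_pow_succ' T g m z, ← dist_smul T g z (T.smul (g ^ m) z)]
      push_cast
      rw [add_mul, one_mul]
      linarith

/-- If displacements along powers are exactly linear from some basepoint, the
translation length equals the linear rate. -/
lemma tl_eq_of_linear (g : G) (P : T.X) (γ : ℝ)
    (hlin : ∀ m : ℕ, T.dist P (T.smul (g ^ m) P) = (m : ℝ) * γ) : T.tl g = γ := by
  have h1 := hlin 1
  rw [pow_one] at h1
  push_cast at h1
  rw [one_mul] at h1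
  have hub : T.tl g ≤ γ := by
    rw [← h1]; exact tl_le_dist T g P
  have hlb : ∀ z, γ ≤ T.dist z (T.smul g z) := by
    intro z
    by_contra hlt
    push_neg at hlt
    set d := T.dist z (T.smul g z) with hd
    have hδ : 0 < γ - d := by linarith
    obtain ⟨m, hm⟩ := exists_nat_gt (2 * T.dist P z / (γ - d))
    have hm' : 2 * T.dist P z / (γ - d) < (m : ℝ) := hm
    have hkey : (m : ℝ) * γ ≤ 2 * T.dist P z + (m : ℝ) * d := by
      have t1 := T.dist_triangle P z (T.smul (g ^ m) P)
      have t2 := T.dist_triangle z (T.smul (g ^ m) z) (T.smul (g ^ m) P)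
      have t3 : T.dist (T.smul (g ^ m) z) (T.smul (g ^ m) P) = T.dist z P := dist_smul T _ _ _
      have t4 := disp_pow_le T g z m
      have t5 := hlin m
      have c := T.dist_comm z P
      linarith
    have : (m : ℝ) * (γ - d) ≤ 2 * T.dist P z := by linarith [hkey]
    rw [div_lt_iff₀ hδ] at hm'
    linarith
  refine le_antisymm hub (le_csInf ⟨_, ⟨P, rfl⟩⟩ ?_)
  rintro b ⟨z, rfl⟩
  exact hlb z

end TransLength

section LineBuild

variable {T : GTree G} {φ : MulAut G} (tt : TrainTrackRep T φ)

/-- Building the legal `h`-invariant line from a seed. -/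
lemma line_build (h : G) (a a' : T.X)
    (hab_leg : tt.LegalSeg a (T.smul h a))
    (hc : 0 < T.dist a (T.smul h a))
    (ha' : Btw T a a' (T.smul h a))
    (ha'ne : a ≠ a')
    (hwit_btw : Btw T a (T.smul h a) (T.smul h a'))
    (hwit_leg : tt.LegalSeg a (T.smul h a')) :
    ∀ m : ℕ, tt.LegalSeg a (T.smul (h ^ m) a) ∧
      T.dist a (T.smul (h ^ m) a) = (m : ℝ) * T.dist a (T.smul h a) := by
  set c := T.dist a (T.smul h a) with hcdef
  have hdistc : ∀ m : ℕ, T.dist (T.smul (h ^ m) a) (T.smul (h ^ (m+1)) a) = c := by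
    intro m
    rw [smul_pow_succ T h m a, dist_smul]
  have Inv : ∀ m : ℕ, tt.LegalSeg a (T.smul (h ^ (m+1)) a) ∧
      Btw T a (T.smul (h ^ m) a) (T.smul (h ^ (m+1)) a) := by
    intro m
    induction m with
    | zero =>
        refine ⟨by rw [pow_one]; exact hab_leg, ?_⟩
        rw [pow_zero, T.smul_one, pow_one]
        exact btw_self_left T a (T.smul h a)
    | succ m ih =>
        obtain ⟨ihL, ihB⟩ := ih
        have hBC : tt.LegalSeg (T.smul (h ^ (m+1)) a) (T.smul (h ^ (m+2)) a) := by
          have h2 := legal_smul tt (h ^ (m+1)) hab_leg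
          rwa [smul_smul', ← pow_succ] at h2
        have ha'btw : Btw T (T.smul (h ^ (m+1)) a) (T.smul (h ^ (m+1)) a')
            (T.smul (h ^ (m+2)) a) := by
          have h2 := btw_smul T (h ^ (m+1)) ha'
          rwa [smul_smul', ← pow_succ] at h2
        have ha'ne2 : T.smul (h ^ (m+1)) a' ≠ T.smul (h ^ (m+1)) a := by
          apply ne_of_dist_pos
          rw [dist_smul, T.dist_comm]
          exact dist_pos T ha'ne
        have hastarne : T.smul (h ^ m) a ≠ T.smul (h ^ (m+1)) a := by
          apply ne_of_dist_pos
          rw [hdistc m]; exact hc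
        have hW : tt.LegalSeg (T.smul (h ^ m) a) (T.smul (h ^ (m+1)) a') := by
          have h2 := legal_smul tt (h ^ m) hwit_leg
          rwa [smul_smul', ← pow_succ] at h2
        have hWb : Btw T (T.smul (h ^ m) a) (T.smul (h ^ (m+1)) a)
            (T.smul (h ^ (m+1)) a') := by
          have h2 := btw_smul T (h ^ m) hwit_btw
          rwa [smul_smul', ← pow_succ, smul_smul' T (h ^ m) h a', ← pow_succ] at h2
        have := legal_concat tt ihL hBC ihB hastarne ha'btw ha'ne2 hW hWb
        exact ⟨this.1, this.2⟩
  have hdd : ∀ m : ℕ, T.dist a (T.smul (h ^ m) a) = (m : ℝ) * c := by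
    intro m
    induction m with
    | zero => simp [pow_zero, T.smul_one, T.dist_self]
    | succ m ih =>
        have hB : T.dist a (T.smul (h ^ m) a) +
            T.dist (T.smul (h ^ m) a) (T.smul (h ^ (m+1)) a) =
            T.dist a (T.smul (h ^ (m+1)) a) := (Inv m).2
        rw [← hB, ih, hdistc m]
        push_cast; ring
  intro m
  refine ⟨?_, hdd m⟩
  cases m with
  | zero => rw [pow_zero, T.smul_one]; exact legal_refl tt a
  | succ m => exact (Inv m).1

end LineBuild


section Axis

variable (T : GTree G)

/-- Culler–Morgan: a point realizing a positive translation length is aligned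
between its translates. -/
lemma axis_align (g : G) (z : T.X) (hpos : 0 < T.tl g)
    (hz : T.dist z (T.smul g z) = T.tl g) :
    Btw T z (T.smul g z) (T.smul g (T.smul g z)) := by
  set D := T.dist z (T.smul g z) with hD
  have hDpos : 0 < D := by rw [hz]; exact hpos
  set k := gp T (T.smul g z) z (T.smul g (T.smul g z)) with hk
  -- midpoint
  obtain ⟨m, hmb, hmd⟩ := exists_btw_dist T z (T.smul g z) (D/2) (by linarith) (by
    rw [← hD]; linarith)
  have hmgz : T.dist m (T.smul g z) = D/2 := by
    have : T.dist z m + T.dist m (T.smul g z) = T.dist z (T.smul g z) := hmb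
    rw [hmd, ← hD] at this
    linarith
  have hgmb : Btw T (T.smul g z) (T.smul g m) (T.smul g (T.smul g z)) := btw_smul T g hmb
  have hgmd : T.dist (T.smul g z) (T.smul g m) = D/2 := by rw [dist_smul, hmd]
  -- gp computations at base g z
  have g1 : gp T (T.smul g z) m z = D/2 := by
    unfold gp
    have c1 := T.dist_comm (T.smul g z) m
    have c2 := T.dist_comm (T.smul g z) z
    have c3 := T.dist_comm m z
    have hb : T.dist z m + T.dist m (T.smul g z) = T.dist z (T.smul g z) := hmb
    rw [← hD] at hb
    linarith [hmd, hmgz]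
  have g2 : gp T (T.smul g z) (T.smul g (T.smul g z)) (T.smul g m) = D/2 := by
    unfold gp
    have hb : T.dist (T.smul g z) (T.smul g m) +
        T.dist (T.smul g m) (T.smul g (T.smul g z)) =
        T.dist (T.smul g z) (T.smul g (T.smul g z)) := hgmb
    have c1 := T.dist_comm (T.smul g m) (T.smul g (T.smul g z))
    linarith [hgmd]
  have hchain1 : min (gp T (T.smul g z) z (T.smul g (T.smul g z)))
      (gp T (T.smul g z) (T.smul g (T.smul g z)) (T.smul g m))
      ≤ gp T (T.smul g z) z (T.smul g m) := gp_min T _ _ _ _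
  have hchain2 : min (gp T (T.smul g z) m z) (gp T (T.smul g z) z (T.smul g m))
      ≤ gp T (T.smul g z) m (T.smul g m) := gp_min T _ _ _ _
  rw [g2] at hchain1
  rw [g1] at hchain2
  rw [← hk] at hchain1
  -- displacement of the midpoint
  have hdisp : T.dist m (T.smul g m) =
      T.dist m (T.smul g z) + T.dist (T.smul g z) (T.smul g m)
        - 2 * gp T (T.smul g z) m (T.smul g m) := by
    unfold gp
    have c1 := T.dist_comm (T.smul g z) m
    have c2 := T.dist_comm (T.smul g z) (T.smul g m)
    ring_nf
    linarith
  have htl := tl_le_dist T g m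
  rw [← hz] at htl
  -- case analysis
  have hk0 : k ≤ 0 := by
    by_contra hkpos
    push_neg at hkpos
    rcases le_total (D/2) k with hcase | hcase
    · -- midpoint is fixed: contradiction with positive tl
      have h1 : D/2 ≤ gp T (T.smul g z) z (T.smul g m) := by
        rcases min_le_iff.mp hchain1 with h | h <;> linarith
      have h2 : D/2 ≤ gp T (T.smul g z) m (T.smul g m) := by
        rcases min_le_iff.mp hchain2 with h | h <;> linarith
      have : T.dist m (T.smul g m) ≤ 0 := by
        rw [hdisp]; linarith [hmgz, hgmd]
      linarith [hD ▸ htl]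
    · have h1 : k ≤ gp T (T.smul g z) z (T.smul g m) := by
        rcases min_le_iff.mp hchain1 with h | h <;> linarith
      have h2 : k ≤ gp T (T.smul g z) m (T.smul g m) := by
        rcases min_le_iff.mp hchain2 with h | h <;> linarith
      have : T.dist m (T.smul g m) ≤ D - 2*k := by
        rw [hdisp]; linarith [hmgz, hgmd]
      have : D ≤ D - 2*k := le_trans (hD ▸ htl) this
      linarith
  have hkz : k = 0 := le_antisymm hk0 (gp_nonneg T _ _ _)
  have := (btw_iff_gp T).mpr (hk ▸ hkz)
  exact this

/-- Chain additivity from alignment. -/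
lemma align_chain (g : G) (z : T.X) (hpos : 0 < T.dist z (T.smul g z))
    (hal : Btw T z (T.smul g z) (T.smul g (T.smul g z))) :
    ∀ m : ℕ, T.dist z (T.smul (g ^ m) z) = (m : ℝ) * T.dist z (T.smul g z) ∧
      Btw T z (T.smul (g ^ m) z) (T.smul (g ^ (m+1)) z) := by
  set c := T.dist z (T.smul g z) with hcdef
  have hdistc : ∀ m : ℕ, T.dist (T.smul (g ^ m) z) (T.smul (g ^ (m+1)) z) = c := by
    intro m
    rw [smul_pow_succ T g m z, dist_smul]
  have Inv : ∀ m : ℕ, Btw T z (T.smul (g ^ m) z) (T.smul (g ^ (m+1)) z) := by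
    intro m
    induction m with
    | zero =>
        rw [pow_zero, T.smul_one, pow_one]
        exact btw_self_left T _ _
    | succ m ih =>
        have htr : Btw T (T.smul (g ^ m) z) (T.smul (g ^ (m+1)) z)
            (T.smul (g ^ (m+2)) z) := by
          have h2 := btw_smul T (g ^ m) hal
          rwa [smul_smul', ← pow_succ, smul_smul' T (g ^ m) g (T.smul g z),
            ← pow_succ, smul_pow_succ T g (m+1) z |>.symm] at h2
        have hne1 : T.smul (g ^ m) z ≠ T.smul (g ^ (m+1)) z := by
          apply ne_of_dist_pos; rw [hdistc m]; exact hpos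
        have hne2 : T.smul (g ^ (m+2)) z ≠ T.smul (g ^ (m+1)) z := by
          apply ne_of_dist_pos; rw [T.dist_comm, hdistc (m+1)]; exact hpos
        exact btw_glue T ih htr (btw_self_right T _ _) hne1 hne2
  intro m
  constructor
  · induction m with
    | zero => simp [pow_zero, T.smul_one, T.dist_self]
    | succ m ih =>
        have hB : T.dist z (T.smul (g ^ m) z) +
            T.dist (T.smul (g ^ m) z) (T.smul (g ^ (m+1)) z) =
            T.dist z (T.smul (g ^ (m+1)) z) := Inv m
        rw [← hB, ih, hdistc m]
        push_cast; ring
  · exact Inv m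

end Axis


section Seed

/-- The key construction: a seed for a legal `h`-invariant line. -/
lemma exists_seed {T : GTree G} {φ : MulAut G} (tt : TrainTrackRep T φ)
    (hprim : tt.Primitive) :
    ∃ (h : G) (a a' : T.X),
      tt.LegalSeg a (T.smul h a) ∧ 0 < T.dist a (T.smul h a) ∧
      Btw T a a' (T.smul h a) ∧ a ≠ a' ∧
      Btw T a (T.smul h a) (T.smul h a') ∧ tt.LegalSeg a (T.smul h a') := by
  classical
  obtain ⟨x, y, hxy, hleg'⟩ := tt.exists_legal
  have hleg : tt.LegalSeg x y := hleg'
  have hd0 : 0 < T.dist x y := dist_pos T hxy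
  set d0 := T.dist x y with hd0def
  -- interior third points
  obtain ⟨u1, hu1b, hu1d⟩ := exists_btw_dist T x y (d0/3) (by linarith) (by
    rw [← hd0def]; linarith)
  obtain ⟨u2, hu2b, hu2d⟩ := exists_btw_dist T x y (2*d0/3) (by linarith) (by
    rw [← hd0def]; linarith)
  have hu12 := btw_pair T hu1b hu2b (by rw [hu1d, hu2d]; linarith)
  have hu12d : T.dist u1 u2 = d0/3 := by rw [hu12.2.2, hu1d, hu2d]; ring
  have hu12ne : u1 ≠ u2 := ne_of_dist_pos T (by rw [hu12d]; linarith)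
  obtain ⟨N, hN⟩ := hprim u1 u2 hu12ne
  set X1 := tt.f^[N] x with hX1
  set Y1 := tt.f^[N] y with hY1
  set R := tt.lam ^ N * d0 / 3 with hR
  have hlN := lam_pow_pos tt N
  have hRpos : 0 < R := by rw [hR]; positivity
  have hXY : tt.LegalSeg X1 Y1 := by
    intro m
    rw [hX1, hY1, ← Function.iterate_add_apply, ← Function.iterate_add_apply]
    have h1 := hleg (m + N)
    have h2 := hleg N
    rw [h1, h2, pow_add]
    ring
  set E : Bool → T.X := fun b => cond b Y1 X1 with hE
  have hEbtw : ∀ b, Btw T X1 (E b) Y1 := by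
    intro b; cases b
    · exact btw_self_left T X1 Y1
    · exact btw_self_right T X1 Y1
  -- window lemma
  have win : ∀ z : T.X, ∃ g : G, Btw T X1 (T.smul g z) Y1 ∧
      (∀ b, R ≤ T.dist (T.smul g z) (E b) ∧ T.dist (T.smul g z) (E b) ≤ 2*R) := by
    intro z
    obtain ⟨g, hg⟩ := hN N le_rfl z
    obtain ⟨z', hz'seg, hz'eq⟩ := hg
    have hz'b : Btw T u1 z' u2 := hz'seg
    have h1 := btw_comp4 T hu12.1 hz'b
    have hxz'y : Btw T x z' y := btw_comp2 T h1.2 hu2b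
    have hz'u2y : Btw T z' u2 y := btw_comp1 T h1.2 hu2b
    have hml : d0/3 ≤ T.dist x z' := by
      have : T.dist x u1 + T.dist u1 z' = T.dist x z' := h1.1
      have hnn := dnn T u1 z'
      rw [hu1d] at this
      linarith
    have hmu : T.dist x z' ≤ 2*d0/3 := by
      have : T.dist x z' + T.dist z' u2 = T.dist x u2 := h1.2
      have hnn := dnn T z' u2
      rw [hu2d] at this
      linarith
    have hyl : d0/3 ≤ T.dist z' y := by
      have hb : T.dist x z' + T.dist z' y = T.dist x y := hxz'y
      rw [← hd0def] at hb
      linarith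
    have hyu : T.dist z' y ≤ 2*d0/3 := by
      have hb : T.dist x z' + T.dist z' y = T.dist x y := hxz'y
      rw [← hd0def] at hb
      linarith
    obtain ⟨i1, i2, i3⟩ := legal_sub1 tt hleg hxz'y N
    rw [hz'eq] at i1 i2 i3
    refine ⟨g, i3, ?_⟩
    intro b
    cases b
    · -- E false = X1
      show R ≤ T.dist (T.smul g z) X1 ∧ T.dist (T.smul g z) X1 ≤ 2*R
      rw [T.dist_comm, i1, hR]
      constructor
      · calc tt.lam ^ N * d0 / 3 = tt.lam ^ N * (d0/3) := by ring
          _ ≤ tt.lam ^ N * T.dist x z' := by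
              apply mul_le_mul_of_nonneg_left hml (le_of_lt hlN)
      · calc tt.lam ^ N * T.dist x z' ≤ tt.lam ^ N * (2*d0/3) := by
              apply mul_le_mul_of_nonneg_left hmu (le_of_lt hlN)
          _ = 2 * (tt.lam ^ N * d0 / 3) := by ring
    · -- E true = Y1
      show R ≤ T.dist (T.smul g z) Y1 ∧ T.dist (T.smul g z) Y1 ≤ 2*R
      rw [i2, hR]
      constructor
      · calc tt.lam ^ N * d0 / 3 = tt.lam ^ N * (d0/3) := by ring
          _ ≤ tt.lam ^ N * T.dist z' y := by
              apply mul_le_mul_of_nonneg_left hyl (le_of_lt hlN)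
      · calc tt.lam ^ N * T.dist z' y ≤ tt.lam ^ N * (2*d0/3) := by
              apply mul_le_mul_of_nonneg_left hyu (le_of_lt hlN)
          _ = 2 * (tt.lam ^ N * d0 / 3) := by ring
  -- one extension step
  have hstep : ∀ e qp : T.X, tt.LegalSeg x e → Btw T x qp e → qp ≠ e →
      ∃ (e' : T.X) (g : G) (b : Bool),
        tt.LegalSeg x e' ∧ Btw T x e e' ∧ e ≠ e' ∧
        T.smul g e' = E b ∧ Btw T X1 (T.smul g e) Y1 ∧
        (∀ b', R ≤ T.dist (T.smul g e) (E b') ∧ T.dist (T.smul g e) (E b') ≤ 2*R) ∧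
        T.dist e e' = T.dist (T.smul g e) (E b) := by
    intro e qp he hq hne
    obtain ⟨g, hwb, hmar⟩ := win e
    set cb : Bool → T.X := fun b => T.smul g⁻¹ (E b) with hcbdef
    have hgcb : ∀ b, T.smul g (cb b) = E b := fun b => smul_cancel' T g (E b)
    have hlecb : ∀ b, tt.LegalSeg e (cb b) := by
      intro b
      have h2 := legal_smul tt g⁻¹ (legal_sub2 tt hXY hwb (hEbtw b))
      rwa [smul_cancel] at h2
    have hbcc : Btw T (cb false) e (cb true) := by
      have h2 := btw_smul T g⁻¹ hwb
      rwa [smul_cancel] at h2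
    have hlcc : tt.LegalSeg (cb false) (cb true) := legal_smul tt g⁻¹ hXY
    have hlqp : tt.LegalSeg qp e := legal_sub2 tt he hq (btw_self_right T x e)
    have hdist : ∀ b, T.dist e (cb b) = T.dist (T.smul g e) (E b) := by
      intro b
      rw [← hgcb b, dist_smul]
    have hcbne : ∀ b, cb b ≠ e := by
      intro b
      apply ne_of_dist_pos
      rw [T.dist_comm, hdist b]
      exact lt_of_lt_of_le hRpos (hmar b).1
    have hdi := ill_or tt (legal_symm tt hlqp) (hlecb true) (hlecb false) hbcc hlcc
    have hex : ∃ b, ¬ Ill tt qp e (cb b) := by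
      rcases hdi with h | h
      exacts [⟨true, h⟩, ⟨false, h⟩]
    obtain ⟨b, hni⟩ := hex
    obtain ⟨hWleg, hWbtw⟩ := legal_of_not_ill tt (legal_symm tt hlqp) (hlecb b) hni
    have hconc := legal_concat tt he (hlecb b) hq hne
      (btw_self_right T e (cb b)) (hcbne b) hWleg hWbtw
    exact ⟨cb b, g, b, hconc.1, hconc.2, (hcbne b).symm, hgcb b, hwb, hmar, hdist b⟩
  -- the state type and the recursive path
  have step : ∀ s : {p : T.X × T.X // tt.LegalSeg x p.1 ∧ Btw T x p.2 p.1 ∧ p.2 ≠ p.1},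
      ∃ s' : {p : T.X × T.X // tt.LegalSeg x p.1 ∧ Btw T x p.2 p.1 ∧ p.2 ≠ p.1},
      ∃ g : G, ∃ b : Bool, s'.1.2 = s.1.1 ∧
      Btw T x s.1.1 s'.1.1 ∧
      T.smul g s'.1.1 = E b ∧ Btw T X1 (T.smul g s.1.1) Y1 ∧
      (∀ b', R ≤ T.dist (T.smul g s.1.1) (E b') ∧ T.dist (T.smul g s.1.1) (E b') ≤ 2*R) ∧
      T.dist s.1.1 s'.1.1 = T.dist (T.smul g s.1.1) (E b) := by
    rintro ⟨⟨e, qp⟩, he, hq, hne⟩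
    obtain ⟨e', g, b, p1, p2, p3, p4, p5, p6, p7⟩ := hstep e qp he hq hne
    exact ⟨⟨(e', e), p1, p2, p3⟩, g, b, rfl, p2, p4, p5, p6, p7⟩
  choose stf gf bf hs1 hs2 hs3 hs4 hs5 hs6 using step
  let seq : ℕ → {p : T.X × T.X // tt.LegalSeg x p.1 ∧ Btw T x p.2 p.1 ∧ p.2 ≠ p.1} :=
    fun n => Nat.rec ⟨(y, x), hleg, btw_self_left T x y, hxy⟩ (fun _ s => stf s) n
  set ee : ℕ → T.X := fun n => (seq n).1.1 with heedef
  set gg : ℕ → G := fun n => gf (seq n) with hggdef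
  set bs : ℕ → Bool := fun n => bf (seq n) with hbsdef
  have L2 : ∀ n, tt.LegalSeg x (ee n) := fun n => (seq n).2.1
  have L3 : ∀ n, Btw T x (ee n) (ee (n+1)) := fun n => hs2 (seq n)
  have L5 : ∀ n, T.smul (gg n) (ee (n+1)) = E (bs n) := fun n => hs3 (seq n)
  have L6 : ∀ n, Btw T X1 (T.smul (gg n) (ee n)) Y1 := fun n => hs4 (seq n)
  have L7 : ∀ n b', R ≤ T.dist (T.smul (gg n) (ee n)) (E b') ∧
      T.dist (T.smul (gg n) (ee n)) (E b') ≤ 2*R := fun n => hs5 (seq n)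
  have L8 : ∀ n, T.dist (ee n) (ee (n+1)) = T.dist (T.smul (gg n) (ee n)) (E (bs n)) :=
    fun n => hs6 (seq n)
  have mono : ∀ i k, Btw T x (ee i) (ee (i+k)) := by
    intro i k
    induction k with
    | zero => exact btw_self_right T x (ee i)
    | succ k ih => exact (btw_chain T ih (L3 (i+k))).1
  set rr : ℕ → ℝ := fun n => T.dist (ee n) (ee (n+1)) with hrrdef
  have hrb : ∀ n, R ≤ rr n ∧ rr n ≤ 2*R := by
    intro n
    have h7 := L7 n (bs n)
    have h8 := L8 n
    constructor
    · show R ≤ T.dist (ee n) (ee (n+1))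
      rw [h8]; exact h7.1
    · show T.dist (ee n) (ee (n+1)) ≤ 2*R
      rw [h8]; exact h7.2
  have hrdef : ∀ n, rr n = T.dist (ee n) (ee (n+1)) := fun _ => rfl
  clear_value rr
  clear_value ee gg bs
  clear hs1 hs2 hs3 hs4 hs5 hs6 heedef hggdef hbsdef hrrdef
  clear seq stf gf bf
  -- pigeonhole on side and radius bin
  obtain ⟨I, K, hIK, hbIK, hr1, hr2⟩ :
      ∃ I K : ℕ, I < K ∧ bs I = bs K ∧ rr I ≤ rr K + R/2 ∧ rr K ≤ rr I + R/2 := by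
    have key : ∀ i j : ℕ, i < j → bs i = bs j →
        ((rr i < 3*R/2) ↔ (rr j < 3*R/2)) →
        ∃ I K : ℕ, I < K ∧ bs I = bs K ∧ rr I ≤ rr K + R/2 ∧ rr K ≤ rr I + R/2 := by
      intro i j hlt hb hiff
      refine ⟨i, j, hlt, hb, ?_, ?_⟩
      · rcases lt_or_ge (rr i) (3*R/2) with hc | hc
        · have := (hrb j).1; linarith
        · have hc2 : ¬ (rr j < 3*R/2) := fun hx => (not_lt.mpr hc) (hiff.mpr hx)
          have := (hrb i).2
          push_neg at hc2
          linarith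
      · rcases lt_or_ge (rr j) (3*R/2) with hc | hc
        · have := (hrb i).1; linarith
        · have hc2 : ¬ (rr i < 3*R/2) := fun hx => (not_lt.mpr hc) (hiff.mp hx)
          have := (hrb j).2
          push_neg at hc2
          linarith
    set cls : Fin 5 → Bool × Bool :=
      fun i => (bs i.val, if rr i.val < 3*R/2 then true else false) with hclsdef
    obtain ⟨i, j, hij, hcls⟩ := Fintype.exists_ne_map_eq_of_card_lt cls (by simp)
    have hb' : bs i.val = bs j.val := congrArg Prod.fst hcls
    have hbin : (rr i.val < 3*R/2) ↔ (rr j.val < 3*R/2) := by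
      have h2 : (if rr i.val < 3*R/2 then true else false)
          = (if rr j.val < 3*R/2 then true else false) := congrArg Prod.snd hcls
      by_cases c1 : rr i.val < 3*R/2 <;> by_cases c2 : rr j.val < 3*R/2 <;>
        simp [c1, c2] at h2 ⊢
    have hvne : i.val ≠ j.val := fun h => hij (Fin.ext h)
    rcases lt_or_gt_of_ne hvne with h | h
    · exact key i.val j.val h hb' hbin
    · exact key j.val i.val h hb'.symm hbin.symm
  -- the seed
  set b0 := bs I with hb0
  set EE := E b0 with hEE
  set A0 := E (!b0) with hA0
  have hA0w : ∀ n, Btw T A0 (T.smul (gg n) (ee n)) EE := by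
    intro n
    have h6 := L6 n
    rw [hEE, hA0]
    cases hb : b0
    · simp only [Bool.not_false]
      show Btw T Y1 (T.smul (gg n) (ee n)) X1
      exact btw_symm T h6
    · simp only [Bool.not_true]
      show Btw T X1 (T.smul (gg n) (ee n)) Y1
      exact h6
  set wI := T.smul (gg I) (ee I) with hwI
  set wK := T.smul (gg K) (ee K) with hwK
  have hrI : rr I = T.dist wI EE := by
    rw [hrdef, L8 I, hwI, hEE, hb0]
  have hrK : rr K = T.dist wK EE := by
    rw [hrdef, L8 K, hwK, hEE, hbIK]
  set ρ := min (rr I) (rr K) with hρ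
  have hρR : R ≤ ρ := le_min (hrb I).1 (hrb K).1
  have hρI : ρ ≤ rr I := min_le_left _ _
  have hρK : ρ ≤ rr K := min_le_right _ _
  set ε := R/4 with hε
  have hεpos : 0 < ε := by rw [hε]; linarith
  have hερ : ε ≤ ρ := by rw [hε]; linarith
  -- points on the model segment
  obtain ⟨P1, hP1b, hP1d⟩ := exists_btw_dist T wI EE (rr I - ρ) (by linarith)
    (by rw [← hrI]; linarith)
  obtain ⟨P2, hP2b, hP2d⟩ := exists_btw_dist T wI EE (rr I - ρ + ε) (by linarith)
    (by rw [← hrI]; linarith)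
  have hP1E : T.dist P1 EE = ρ := by
    have hb : T.dist wI P1 + T.dist P1 EE = T.dist wI EE := hP1b
    rw [hP1d, ← hrI] at hb; linarith
  have hP2E : T.dist P2 EE = ρ - ε := by
    have hb : T.dist wI P2 + T.dist P2 EE = T.dist wI EE := hP2b
    rw [hP2d, ← hrI] at hb; linarith
  have hP12 : T.dist P1 P2 = ε := by
    have h12 := (btw_pair T hP1b hP2b (by rw [hP1d, hP2d]; linarith)).2.2
    rw [h12, hP1d, hP2d]; ring
  -- memberships in chunk K
  have hA0P1 : Btw T A0 P1 EE := (btw_comp4 T (hA0w I) hP1b).2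
  have hA0P2 : Btw T A0 P2 EE := (btw_comp4 T (hA0w I) hP2b).2
  have hwKmem : Btw T A0 wK EE := hA0w K
  have hdEwK : T.dist EE wK = rr K := by rw [T.dist_comm, ← hrK]
  have hP1wK : Btw T wK P1 EE := by
    have h1 := btw_pair T (btw_symm T hA0P1) (btw_symm T hwKmem)
      (by rw [T.dist_comm EE P1, hP1E, hdEwK]; linarith)
    exact btw_symm T h1.1
  have hP2wK : Btw T wK P2 EE := by
    have h1 := btw_pair T (btw_symm T hA0P2) (btw_symm T hwKmem)
      (by rw [T.dist_comm EE P2, hP2E, hdEwK]; linarith)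
    exact btw_symm T h1.1
  -- pull back
  set a := T.smul (gg I)⁻¹ P1 with ha
  set a' := T.smul (gg I)⁻¹ P2 with ha'
  set β := T.smul (gg K)⁻¹ P1 with hβ
  set β' := T.smul (gg K)⁻¹ P2 with hβ'
  set hh := (gg K)⁻¹ * (gg I) with hhh
  have hha : T.smul hh a = β := by
    rw [ha, hβ, hhh, ← smul_smul', smul_cancel']
  have hha' : T.smul hh a' = β' := by
    rw [ha', hβ', hhh, ← smul_smul', smul_cancel']
  have hEI : T.smul (gg I)⁻¹ EE = ee (I+1) := by
    rw [hEE, hb0, ← L5 I, smul_cancel]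
  have hEK : T.smul (gg K)⁻¹ EE = ee (K+1) := by
    rw [hEE, hbIK, ← L5 K, smul_cancel]
  have hwIinv : T.smul (gg I)⁻¹ wI = ee I := by rw [hwI, smul_cancel]
  have hwKinv : T.smul (gg K)⁻¹ wK = ee K := by rw [hwK, smul_cancel]
  -- chunk memberships downstairs
  have haI : Btw T (ee I) a (ee (I+1)) := by
    have hbt := btw_smul T (gg I)⁻¹ hP1b
    rwa [hwIinv, hEI] at hbt
  have ha'I : Btw T (ee I) a' (ee (I+1)) := by
    have hbt := btw_smul T (gg I)⁻¹ hP2b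
    rwa [hwIinv, hEI] at hbt
  have hβK : Btw T (ee K) β (ee (K+1)) := by
    have hbt := btw_smul T (gg K)⁻¹ hP1wK
    rwa [hwKinv, hEK] at hbt
  have hβ'K : Btw T (ee K) β' (ee (K+1)) := by
    have hbt := btw_smul T (gg K)⁻¹ hP2wK
    rwa [hwKinv, hEK] at hbt
  -- distances to chunk ends
  have hdaI : T.dist a (ee (I+1)) = ρ := by rw [ha, ← hEI, dist_smul, hP1E]
  have hda'I : T.dist a' (ee (I+1)) = ρ - ε := by rw [ha', ← hEI, dist_smul, hP2E]
  have hdβK : T.dist β (ee (K+1)) = ρ := by rw [hβ, ← hEK, dist_smul, hP1E]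
  have hdβ'K : T.dist β' (ee (K+1)) = ρ - ε := by rw [hβ', ← hEK, dist_smul, hP2E]
  have hdaa' : T.dist a a' = ε := by rw [ha, ha', dist_smul, hP12]
  -- global memberships
  have hup : Btw T x (ee (I+1)) (ee (K+1)) := by
    have hm := mono (I+1) (K - I)
    rwa [show I + 1 + (K - I) = K + 1 by omega] at hm
  have hmema : Btw T x a (ee (K+1)) :=
    (btw_chain T (btw_comp4 T (L3 I) haI).2 hup).1
  have hmema2 : Btw T x a (ee (I+1)) := (btw_comp4 T (L3 I) haI).2
  have hmema' : Btw T x a' (ee (K+1)) :=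
    (btw_chain T (btw_comp4 T (L3 I) ha'I).2 hup).1
  have hmema'2 : Btw T x a' (ee (I+1)) := (btw_comp4 T (L3 I) ha'I).2
  have hmemβ : Btw T x β (ee (K+1)) := (btw_comp4 T (L3 K) hβK).2
  have hmemβ' : Btw T x β' (ee (K+1)) := (btw_comp4 T (L3 K) hβ'K).2
  -- coordinates
  set sI1 := T.dist x (ee (I+1)) with hsI1
  set sK1 := T.dist x (ee (K+1)) with hsK1
  have hsum : sI1 + rr K ≤ sK1 := by
    have h1 : Btw T x (ee (I+1)) (ee K) := by
      have hm := mono (I+1) (K - (I+1))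
      rwa [show I + 1 + (K - (I+1)) = K by omega] at hm
    have h2 : T.dist x (ee (I+1)) ≤ T.dist x (ee K) := by
      have hb : T.dist x (ee (I+1)) + T.dist (ee (I+1)) (ee K) = T.dist x (ee K) := h1
      have := dnn T (ee (I+1)) (ee K)
      linarith
    have h3 : T.dist x (ee K) + rr K = T.dist x (ee (K+1)) := by
      have hb : T.dist x (ee K) + T.dist (ee K) (ee (K+1)) = T.dist x (ee (K+1)) := L3 K
      have hr : rr K = T.dist (ee K) (ee (K+1)) := hrdef K
      linarith [hb, hr]
    rw [hsI1, hsK1]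
    linarith
  have hxa : T.dist x a = sI1 - ρ := by
    have hb : T.dist x a + T.dist a (ee (I+1)) = T.dist x (ee (I+1)) := hmema2
    rw [hdaI] at hb; rw [hsI1]; linarith
  have hxa' : T.dist x a' = sI1 - ρ + ε := by
    have hb : T.dist x a' + T.dist a' (ee (I+1)) = T.dist x (ee (I+1)) := hmema'2
    rw [hda'I] at hb; rw [hsI1]; linarith
  have hxβ : T.dist x β = sK1 - ρ := by
    have hb : T.dist x β + T.dist β (ee (K+1)) = T.dist x (ee (K+1)) := hmemβ
    rw [hdβK] at hb; rw [hsK1]; linarith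
  have hxβ' : T.dist x β' = sK1 - ρ + ε := by
    have hb : T.dist x β' + T.dist β' (ee (K+1)) = T.dist x (ee (K+1)) := hmemβ'
    rw [hdβ'K] at hb; rw [hsK1]; linarith
  have hRK : R ≤ rr K := (hrb K).1
  have ho1 : T.dist x a ≤ T.dist x a' := by rw [hxa, hxa']; linarith
  have ho2 : T.dist x a' ≤ T.dist x β := by
    rw [hxa', hxβ]
    have : ε ≤ rr K := by rw [hε]; linarith
    linarith
  have ho3 : T.dist x β ≤ T.dist x β' := by rw [hxβ, hxβ']; linarith
  have pB1 := btw_pair T hmema hmema' ho1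
  have pB2 := btw_pair T hmema' hmemβ ho2
  have pB3 := btw_pair T hmemβ hmemβ' ho3
  have pB4 := btw_pair T hmema hmemβ (le_trans ho1 ho2)
  have hcpos : 0 < T.dist a β := by
    rw [pB4.2.2, hxa, hxβ]
    linarith
  have hbaa'β : Btw T a a' β := btw_comp1 T pB1.1 pB2.1
  have hbaββ' : Btw T a β β' := btw_comp1 T pB4.1 pB3.1
  have hlegaβ : tt.LegalSeg a β := legal_sub2 tt (L2 (K+1)) hmema hmemβ
  have hlegaβ' : tt.LegalSeg a β' := legal_sub2 tt (L2 (K+1)) hmema hmemβ'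
  have ane : a ≠ a' := ne_of_dist_pos T (by rw [hdaa']; exact hεpos)
  refine ⟨hh, a, a', ?_, ?_, ?_, ane, ?_, ?_⟩
  · rw [hha]; exact hlegaβ
  · rw [hha]; exact hcpos
  · rw [hha]; exact hbaa'β
  · rw [hha, hha']; exact hbaββ'
  · rw [hha']; exact hlegaβ'

end Seed


section TlPow

variable {T : GTree G} {φ : MulAut G} (tt : TrainTrackRep T φ)

lemma tl_phi_pow (h : G) (a : T.X) (c : ℝ)
    (hline : ∀ m : ℕ, tt.LegalSeg a (T.smul (h ^ m) a) ∧
      T.dist a (T.smul (h ^ m) a) = (m : ℝ) * c) :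
    ∀ n m : ℕ, T.tl ((φ ^ n : MulAut G) (h ^ m)) = tt.lam ^ n * ((m : ℝ) * c) := by
  intro n m
  apply tl_eq_of_linear T _ (tt.f^[n] a)
  intro m'
  have hpow : ((φ ^ n : MulAut G) (h ^ m)) ^ m' = (φ ^ n : MulAut G) (h ^ (m * m')) := by
    rw [← map_pow, ← pow_mul]
  rw [hpow]
  have hsm : T.smul ((φ ^ n : MulAut G) (h ^ (m * m'))) (tt.f^[n] a)
      = tt.f^[n] (T.smul (h ^ (m * m')) a) := (iter_equiv tt n (h ^ (m * m')) a).symm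
  rw [hsm]
  have hl := (hline (m * m')).1 n
  rw [hl, (hline (m * m')).2]
  push_cast
  ring

end TlPow

end S16

/-- Let `f : T → T` be a train track representative of `φ ∈ Out(G)` with
primitive transition matrix (expressed metrically) and stretch factor `λ`.
Then there exists a loxodromic `h ∈ G` whose axis in `T` is `f`-legal, and
`‖φⁿ(h)‖_T = λⁿ·‖h‖_T` for every `n ∈ ℕ`; consequently
`Lip(T, T·φⁿ) = λⁿ` for every `n ∈ ℕ` (where `T·φⁿ` is `T` with the action
twisted by `φⁿ`). -/
theorem stmt16 {G : Type*} [Group G] (S : DefSpace G) (φ : MulAut G)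
    (TT : S.D) (tt : TrainTrackRep (S.tr TT) φ) (hprim : tt.Primitive) :
    ∃ h : G, (S.tr TT).Loxodromic h ∧
      (∀ x ∈ (S.tr TT).axis h, ∀ y ∈ (S.tr TT).axis h, tt.LegalSeg x y) ∧
      (∀ n : ℕ, (S.tr TT).tl ((φ ^ n : MulAut G) h) = tt.lam ^ n * (S.tr TT).tl h) ∧
      (∀ n : ℕ, lipConst (S.tr TT) ((S.tr TT).twist (φ ^ n)) = tt.lam ^ n) := by
  classical
  obtain ⟨h, a, a', sleg, spos, sbtw, sne, switb, switl⟩ := S16.exists_seed tt hprim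
  set c := (S.tr TT).dist a ((S.tr TT).smul h a) with hc
  have hcpos : 0 < c := spos
  have hline := S16.line_build tt h a a' sleg spos sbtw sne switb switl
  have htlpow := S16.tl_phi_pow tt h a c hline
  have htlh : (S.tr TT).tl h = c := by
    have h01 := htlpow 0 1
    rw [pow_one] at h01
    simpa using h01
  have hlox : (S.tr TT).Loxodromic h := by
    show 0 < (S.tr TT).tl h
    rw [htlh]; exact hcpos
  have part3 : ∀ n : ℕ, (S.tr TT).tl ((φ ^ n : MulAut G) h) = tt.lam ^ n * (S.tr TT).tl h := by
    intro n
    have hn1 := htlpow n 1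
    rw [pow_one] at hn1
    rw [htlh, hn1]
    norm_num
  -- axis points: chain distances and legality to powers
  have haxis_leg : ∀ z : (S.tr TT).X, (S.tr TT).dist z ((S.tr TT).smul h z) = (S.tr TT).tl h → ∀ m : ℕ,
      (S.tr TT).dist z ((S.tr TT).smul (h ^ m) z) = (m : ℝ) * c ∧ tt.LegalSeg z ((S.tr TT).smul (h ^ m) z) := by
    intro z hz
    have hzc : (S.tr TT).dist z ((S.tr TT).smul h z) = c := by rw [hz, htlh]
    have hal : S16.Btw (S.tr TT) z ((S.tr TT).smul h z) ((S.tr TT).smul h ((S.tr TT).smul h z)) :=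
      S16.axis_align (S.tr TT) h z (by rw [← htlh] at hcpos; exact hcpos) hz
    have hch := S16.align_chain (S.tr TT) h z (by rw [hzc]; exact hcpos) hal
    intro m
    have hd : (S.tr TT).dist z ((S.tr TT).smul (h ^ m) z) = (m : ℝ) * c := by
      rw [(hch m).1, hzc]
    refine ⟨hd, ?_⟩
    intro j
    have hub := S16.lip_iter tt j z ((S.tr TT).smul (h ^ m) z)
    have heq : tt.f^[j] ((S.tr TT).smul (h ^ m) z)
        = (S.tr TT).smul ((φ ^ j : MulAut G) (h ^ m)) (tt.f^[j] z) := S16.iter_equiv tt j _ _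
    have hlb : (S.tr TT).tl ((φ ^ j : MulAut G) (h ^ m))
        ≤ (S.tr TT).dist (tt.f^[j] z) (tt.f^[j] ((S.tr TT).smul (h ^ m) z)) := by
      rw [heq]; exact S16.tl_le_dist (S.tr TT) _ _
    rw [htlpow j m] at hlb
    rw [hd] at hub ⊢
    linarith
  have part2 : ∀ x₀ ∈ (S.tr TT).axis h, ∀ y₀ ∈ (S.tr TT).axis h, tt.LegalSeg x₀ y₀ := by
    intro x₀ hx₀ y₀ hy₀
    have hx : (S.tr TT).dist x₀ ((S.tr TT).smul h x₀) = (S.tr TT).tl h := hx₀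
    have hy : (S.tr TT).dist y₀ ((S.tr TT).smul h y₀) = (S.tr TT).tl h := hy₀
    by_cases hxy0 : x₀ = y₀
    · rw [hxy0]; exact S16.legal_refl tt y₀
    set D0 := (S.tr TT).dist x₀ y₀ with hD0
    have hD0pos : 0 < D0 := S16.dist_pos (S.tr TT) hxy0
    obtain ⟨m, hm⟩ : ∃ m : ℕ, D0 < (m : ℝ) * c := by
      obtain ⟨m, hm⟩ := exists_nat_gt (D0 / c)
      exact ⟨m, by rw [div_lt_iff₀ hcpos] at hm; linarith⟩
    have hxch := haxis_leg x₀ hx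
    have hych := haxis_leg y₀ hy
    set A := (S.tr TT).smul ((h⁻¹) ^ m) x₀ with hA
    set B := (S.tr TT).smul (h ^ m) x₀ with hB
    have hinv : ∀ z : (S.tr TT).X, (S.tr TT).dist z ((S.tr TT).smul ((h⁻¹) ^ m) z)
        = (S.tr TT).dist z ((S.tr TT).smul (h ^ m) z) := by
      intro z
      rw [← S16.dist_smul (S.tr TT) (h ^ m) z ((S.tr TT).smul ((h⁻¹) ^ m) z), S16.smul_inv_pow_cancel,
        (S.tr TT).dist_comm ((S.tr TT).smul (h ^ m) z) z]
    have dyhm : (S.tr TT).dist y₀ ((S.tr TT).smul (h ^ m) y₀) = (m : ℝ) * c := (hych m).1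
    have dxhm : (S.tr TT).dist x₀ B = (m : ℝ) * c := (hxch m).1
    have dyinv : (S.tr TT).dist y₀ ((S.tr TT).smul ((h⁻¹) ^ m) y₀) = (m : ℝ) * c := by
      rw [hinv y₀]; exact dyhm
    have dxinv : (S.tr TT).dist x₀ A = (m : ℝ) * c := by
      rw [hA, hinv x₀]; exact dxhm
    have dABsum : ∀ z : (S.tr TT).X, (S.tr TT).dist ((S.tr TT).smul ((h⁻¹) ^ m) z) ((S.tr TT).smul (h ^ m) z)
        = (S.tr TT).dist z ((S.tr TT).smul (h ^ (m + m)) z) := by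
      intro z
      rw [← S16.dist_smul (S.tr TT) (h ^ m) ((S.tr TT).smul ((h⁻¹) ^ m) z) ((S.tr TT).smul (h ^ m) z),
        S16.smul_inv_pow_cancel, S16.smul_pow_add]
    have dAB : (S.tr TT).dist A B = (m : ℝ) * c + (m : ℝ) * c := by
      rw [hA, hB, dABsum x₀, (hxch (m + m)).1]
      push_cast; ring
    have hAxB : S16.Btw (S.tr TT) A x₀ B := by
      show (S.tr TT).dist A x₀ + (S.tr TT).dist x₀ B = (S.tr TT).dist A B
      rw [(S.tr TT).dist_comm A x₀, dxinv, dxhm, dAB]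
    have t1 : (S.tr TT).dist B ((S.tr TT).smul (h ^ m) y₀) = D0 := by
      rw [hB, S16.dist_smul]
    have t2 : (S.tr TT).dist A ((S.tr TT).smul ((h⁻¹) ^ m) y₀) = D0 := by
      rw [hA, S16.dist_smul]
    have hyB : (m : ℝ) * c - D0 ≤ (S.tr TT).dist y₀ B := by
      have htr := (S.tr TT).dist_triangle y₀ B ((S.tr TT).smul (h ^ m) y₀)
      rw [t1] at htr
      rw [dyhm] at htr
      linarith
    have hyA : (m : ℝ) * c - D0 ≤ (S.tr TT).dist y₀ A := by
      have htr := (S.tr TT).dist_triangle y₀ A ((S.tr TT).smul ((h⁻¹) ^ m) y₀)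
      rw [t2] at htr
      rw [dyinv] at htr
      linarith
    have g1 : (m : ℝ) * c - D0 ≤ S16.gp (S.tr TT) y₀ B ((S.tr TT).smul (h ^ m) y₀) := by
      unfold S16.gp
      rw [dyhm, t1]
      linarith
    have g2 : (m : ℝ) * c - D0 ≤ S16.gp (S.tr TT) y₀ A ((S.tr TT).smul ((h⁻¹) ^ m) y₀) := by
      unfold S16.gp
      rw [dyinv, t2]
      linarith
    have g0 : S16.gp (S.tr TT) y₀ ((S.tr TT).smul ((h⁻¹) ^ m) y₀) ((S.tr TT).smul (h ^ m) y₀) = 0 := by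
      apply (S16.btw_iff_gp (S.tr TT)).mp
      show (S.tr TT).dist ((S.tr TT).smul ((h⁻¹) ^ m) y₀) y₀ + (S.tr TT).dist y₀ ((S.tr TT).smul (h ^ m) y₀)
          = (S.tr TT).dist ((S.tr TT).smul ((h⁻¹) ^ m) y₀) ((S.tr TT).smul (h ^ m) y₀)
      rw [(S.tr TT).dist_comm ((S.tr TT).smul ((h⁻¹) ^ m) y₀) y₀, dyinv, dyhm, dABsum y₀,
        (hych (m + m)).1]
      push_cast; ring
    have hmpos : 0 < (m : ℝ) * c - D0 := by linarith
    have k1 : S16.gp (S.tr TT) y₀ A ((S.tr TT).smul (h ^ m) y₀) = 0 := by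
      have hmin := S16.gp_min (S.tr TT) y₀ ((S.tr TT).smul ((h⁻¹) ^ m) y₀) A ((S.tr TT).smul (h ^ m) y₀)
      rw [g0] at hmin
      have hcm : S16.gp (S.tr TT) y₀ ((S.tr TT).smul ((h⁻¹) ^ m) y₀) A
          = S16.gp (S.tr TT) y₀ A ((S.tr TT).smul ((h⁻¹) ^ m) y₀) := S16.gp_comm (S.tr TT) _ _ _
      rw [hcm] at hmin
      have hnn := S16.gp_nonneg (S.tr TT) y₀ A ((S.tr TT).smul (h ^ m) y₀)
      rcases min_le_iff.mp hmin with hcase | hcase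
      · linarith
      · linarith
    have k2 : S16.gp (S.tr TT) y₀ A B = 0 := by
      have hmin := S16.gp_min (S.tr TT) y₀ A B ((S.tr TT).smul (h ^ m) y₀)
      rw [k1] at hmin
      have hnn := S16.gp_nonneg (S.tr TT) y₀ A B
      rcases min_le_iff.mp hmin with hcase | hcase
      · linarith
      · linarith
    have hAyB : S16.Btw (S.tr TT) A y₀ B := (S16.btw_iff_gp (S.tr TT)).mpr k2
    have hlegAB : tt.LegalSeg A B := by
      have h2 := S16.legal_smul tt ((h⁻¹) ^ m) (hxch (m + m)).2
      have he : (S.tr TT).smul ((h⁻¹) ^ m) ((S.tr TT).smul (h ^ (m + m)) x₀) = B := by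
        rw [S16.smul_smul', inv_pow, hB]
        congr 1
        rw [pow_add, inv_mul_cancel_left]
      rw [he] at h2
      exact h2
    exact S16.legal_sub2 tt hlegAB hAxB hAyB
  have part4 : ∀ n : ℕ, lipConst (S.tr TT) ((S.tr TT).twist (φ ^ n)) = tt.lam ^ n := by
    intro n
    have hmem : tt.lam ^ n ∈ {K | 0 ≤ K ∧ ∃ f : (S.tr TT).X → ((S.tr TT).twist (φ ^ n)).X,
        Equivariant (S.tr TT) ((S.tr TT).twist (φ ^ n)) f ∧ LipWith (S.tr TT) ((S.tr TT).twist (φ ^ n)) K f} := by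
      refine ⟨le_of_lt (S16.lam_pow_pos tt n), tt.f^[n], ?_, ?_⟩
      · intro g z
        show tt.f^[n] ((S.tr TT).smul g z) = (S.tr TT).smul ((φ ^ n : MulAut G) g) (tt.f^[n] z)
        exact S16.iter_equiv tt n g z
      · intro u v
        show (S.tr TT).dist (tt.f^[n] u) (tt.f^[n] v) ≤ tt.lam ^ n * (S.tr TT).dist u v
        exact S16.lip_iter tt n u v
    have hlow : ∀ K ∈ {K | 0 ≤ K ∧ ∃ f : (S.tr TT).X → ((S.tr TT).twist (φ ^ n)).X,
        Equivariant (S.tr TT) ((S.tr TT).twist (φ ^ n)) f ∧ LipWith (S.tr TT) ((S.tr TT).twist (φ ^ n)) K f},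
        tt.lam ^ n ≤ K := by
      rintro K ⟨hK0, θ, hEq, hLip⟩
      have he : θ ((S.tr TT).smul h a) = (S.tr TT).smul ((φ ^ n : MulAut G) h) (θ a) := hEq h a
      have h2 : (S.tr TT).dist (θ a) ((S.tr TT).smul ((φ ^ n : MulAut G) h) (θ a)) ≤ K * c := by
        rw [← he, hc]
        exact hLip a ((S.tr TT).smul h a)
      have h1 : (S.tr TT).tl ((φ ^ n : MulAut G) h) ≤ K * c :=
        le_trans (S16.tl_le_dist (S.tr TT) _ _) h2
      have h3 : (S.tr TT).tl ((φ ^ n : MulAut G) h) = tt.lam ^ n * c := by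
        rw [part3 n, htlh]
      rw [h3] at h1
      exact le_of_mul_le_mul_right (by linarith) hcpos
    apply le_antisymm
    · exact csInf_le ⟨0, fun K hK => hK.1⟩ hmem
    · exact le_csInf ⟨_, hmem⟩ hlow
  exact ⟨h, hlox, part2, part3, part4⟩

end GBSFormal
end
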